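/- arXiv:1301.1751 — 13 statements merged into one kernel-verified Lean document; each statement's English description precedes it below -/
import Mathlib

section
/- Let d be the metric on Fin 4 with d(i,i) = 0, d(i,j) = 1 for distinct i, j ∈ {0,1,2}, and d(i,3) = d(3,i) = 1/2 for i ∈ {0,1,2}. Let A and B be probability vectors on Fin 4 with A(3) ≥ B(3). Then EMD_d(A, B) = (1/2)·(A(3) − B(3)) + ∑_{i ∈ {0,1,2} : A(i) ≥ B(i)} (A(i) − B(i)). -/
open Finset

def IsProbVec {s : ℕ} (X : Fin s → ℝ) : Prop :=
  (∀ i, 0 ≤ X i) ∧ ∑ i, X i = 1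

noncomputable def EMD {s : ℕ} (d : Fin s → Fin s → ℝ) (X Y : Fin s → ℝ) : ℝ :=
  sInf { c : ℝ | ∃ f : Fin s → Fin s → ℝ,
    (∀ i j, 0 ≤ f i j) ∧ (∀ i, ∑ j, f i j = X i) ∧ (∀ j, ∑ i, f i j = Y j) ∧
    c = ∑ i, ∑ j, d i j * f i j }

/-- The metric on `Fin 4` with distance 1 between distinct points of `{0,1,2}`
and distance 1/2 between `3` and each of `0,1,2`. -/
noncomputable def d4 : Fin 4 → Fin 4 → ℝ := fun i j =>
  if i = j then 0 else if i = 3 ∨ j = 3 then 1/2 else 1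

lemma emd_lb (A B : Fin 4 → ℝ) :
    ∀ c ∈ { c : ℝ | ∃ f : Fin 4 → Fin 4 → ℝ,
      (∀ i j, 0 ≤ f i j) ∧ (∀ i, ∑ j, f i j = A i) ∧ (∀ j, ∑ i, f i j = B j) ∧
      c = ∑ i, ∑ j, d4 i j * f i j },
      (1/2) * (|A 0 - B 0| + |A 1 - B 1| + |A 2 - B 2|) ≤ c := by
  rintro c ⟨f, hf, hrow, hcol, rfl⟩
  have r0 := hrow 0; have r1 := hrow 1; have r2 := hrow 2
  have c0 := hcol 0; have c1 := hcol 1; have c2 := hcol 2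
  simp only [Fin.sum_univ_four] at r0 r1 r2 c0 c1 c2
  have h0 : |A 0 - B 0| ≤ f 0 1 + f 0 2 + f 0 3 + (f 1 0 + f 2 0 + f 3 0) := by
    rw [abs_le]
    constructor
    · have := hf 0 1; have := hf 0 2; have := hf 0 3; linarith
    · have := hf 1 0; have := hf 2 0; have := hf 3 0; linarith
  have h1 : |A 1 - B 1| ≤ f 1 0 + f 1 2 + f 1 3 + (f 0 1 + f 2 1 + f 3 1) := by
    rw [abs_le]
    constructor
    · have := hf 1 0; have := hf 1 2; have := hf 1 3; linarith
    · have := hf 0 1; have := hf 2 1; have := hf 3 1; linarith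
  have h2 : |A 2 - B 2| ≤ f 2 0 + f 2 1 + f 2 3 + (f 0 2 + f 1 2 + f 3 2) := by
    rw [abs_le]
    constructor
    · have := hf 2 0; have := hf 2 1; have := hf 2 3; linarith
    · have := hf 0 2; have := hf 1 2; have := hf 3 2; linarith
  have hd : ∑ i, ∑ j, d4 i j * f i j =
      (f 0 1 + f 0 2 + f 1 0 + f 1 2 + f 2 0 + f 2 1) +
      (1/2) * (f 0 3 + f 1 3 + f 2 3 + f 3 0 + f 3 1 + f 3 2) := by
    simp only [Fin.sum_univ_four]
    simp [d4]
    ring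
  rw [hd]
  linarith

lemma cost_eq (m a b : Fin 4 → ℝ) (S : ℝ) (hSne : S ≠ 0)
    (hab : ∀ i, a i * b i = 0)
    (hSa : S = a 0 + a 1 + a 2 + a 3) (hSb : S = b 0 + b 1 + b 2 + b 3) :
    ∑ i, ∑ j, d4 i j * ((if i = j then m i else 0) + a i * b j / S)
      = (1/2) * ((a 0 + b 0) + (a 1 + b 1) + (a 2 + b 2)) := by
  have h0 := hab 0; have h1 := hab 1; have h2 := hab 2
  simp only [Fin.sum_univ_four]
  simp [d4]
  field_simp
  linear_combination (-(a 0 + a 1 + a 2))*hSb + (-(b 0 + b 1 + b 2))*hSa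
    - 2*h0 - 2*h1 - 2*h2

theorem stmt1 (A B : Fin 4 → ℝ) (hA : IsProbVec A) (hB : IsProbVec B)
    (h3 : B 3 ≤ A 3) :
    EMD d4 A B = (1/2) * (A 3 - B 3) +
      ∑ i ∈ ({0, 1, 2} : Finset (Fin 4)).filter (fun i => B i ≤ A i), (A i - B i) := by
  obtain ⟨hAn, hAs⟩ := hA
  obtain ⟨hBn, hBs⟩ := hB
  rw [Fin.sum_univ_four] at hAs hBs
  have key : EMD d4 A B = (1/2) * (|A 0 - B 0| + |A 1 - B 1| + |A 2 - B 2|) := by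
    apply le_antisymm
    · apply csInf_le
      · exact ⟨_, emd_lb A B⟩
      · -- construct an optimal flow
        obtain ⟨a, ha⟩ : ∃ a : Fin 4 → ℝ, ∀ i, a i = A i - min (A i) (B i) :=
          ⟨fun i => A i - min (A i) (B i), fun _ => rfl⟩
        obtain ⟨b, hb⟩ : ∃ b : Fin 4 → ℝ, ∀ i, b i = B i - min (A i) (B i) :=
          ⟨fun i => B i - min (A i) (B i), fun _ => rfl⟩
        obtain ⟨S, hS⟩ : ∃ S : ℝ, S = a 0 + a 1 + a 2 + a 3 := ⟨_, rfl⟩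
        have hSb : S = b 0 + b 1 + b 2 + b 3 := by
          rw [hS, ha 0, ha 1, ha 2, ha 3, hb 0, hb 1, hb 2, hb 3]; linarith
        have han : ∀ i, 0 ≤ a i := fun i => by
          rw [ha i]; have := min_le_left (A i) (B i); linarith
        have hbn : ∀ i, 0 ≤ b i := fun i => by
          rw [hb i]; have := min_le_right (A i) (B i); linarith
        have hab : ∀ i, a i * b i = 0 := fun i => by
          rcases min_cases (A i) (B i) with ⟨h, _⟩ | ⟨h, _⟩
          · rw [ha i, h, sub_self, zero_mul]
          · rw [hb i, h, sub_self, mul_zero]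
        have habs : ∀ i, |A i - B i| = a i + b i := fun i => by
          rcases min_cases (A i) (B i) with ⟨h, h'⟩ | ⟨h, h'⟩
          · rw [abs_of_nonpos (by linarith), ha i, hb i, h]; ring
          · rw [abs_of_nonneg (by linarith), ha i, hb i, h]; ring
        by_cases hSne : S = 0
        · -- then A = B; use the diagonal flow
          rw [hS] at hSne
          have hSbz := hSb; rw [hS] at hSbz
          have n0 := han 0; have n1 := han 1; have n2 := han 2; have n3 := han 3
          have p0 := hbn 0; have p1 := hbn 1; have p2 := hbn 2; have p3 := hbn 3
          have z0 : a 0 = 0 := by linarith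
          have z1 : a 1 = 0 := by linarith
          have z2 : a 2 = 0 := by linarith
          have z3 : a 3 = 0 := by linarith
          have w0 : b 0 = 0 := by linarith
          have w1 : b 1 = 0 := by linarith
          have w2 : b 2 = 0 := by linarith
          have w3 : b 3 = 0 := by linarith
          have haz : ∀ i, a i = 0 := fun i => by fin_cases i <;> assumption
          have hbz : ∀ i, b i = 0 := fun i => by fin_cases i <;> assumption
          have hAB : ∀ i, A i = B i := fun i => by
            have u := haz i; have v := hbz i
            rw [ha i] at u; rw [hb i] at v; linarith
          refine ⟨fun i j => if i = j then A i else 0, ?_, ?_, ?_, ?_⟩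
          · intro i j; dsimp only; split_ifs with h; exacts [hAn i, le_refl 0]
          · intro i; rw [Finset.sum_ite_eq]; simp
          · intro j; rw [Finset.sum_ite_eq']; simp [hAB j]
          · simp only [Fin.sum_univ_four]
            simp [d4, hAB 0, hAB 1, hAB 2]
        · have hSnn : 0 ≤ S := by
            rw [hS]
            have := han 0; have := han 1; have := han 2; have := han 3; linarith
          have hSpos : 0 < S := lt_of_le_of_ne hSnn (Ne.symm hSne)
          refine ⟨fun i j => (if i = j then min (A i) (B i) else 0) + a i * b j / S,
            ?_, ?_, ?_, ?_⟩
          · intro i j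
            have hmn : 0 ≤ min (A i) (B i) := le_min (hAn i) (hBn i)
            have hq : 0 ≤ a i * b j / S := div_nonneg (mul_nonneg (han i) (hbn j)) hSpos.le
            dsimp only; split_ifs <;> linarith
          · intro i
            rw [Finset.sum_add_distrib, Finset.sum_ite_eq]
            have : ∑ j, a i * b j / S = a i * ((b 0 + b 1 + b 2 + b 3) / S) := by
              rw [Fin.sum_univ_four]; ring
            rw [this, ← hSb, div_self hSne, mul_one]
            have := ha i; simp; linarith
          · intro j
            rw [Finset.sum_add_distrib, Finset.sum_ite_eq']
            have : ∑ i, a i * b j / S = ((a 0 + a 1 + a 2 + a 3) / S) * b j := by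
              rw [Fin.sum_univ_four]; ring
            rw [this, ← hS, div_self hSne, one_mul]
            have := hb j; simp; linarith
          · rw [habs 0, habs 1, habs 2]
            exact (cost_eq (fun i => min (A i) (B i)) a b S hSne hab hS hSb).symm
    · exact le_csInf ⟨∑ i, ∑ j, d4 i j * (A i * B j),
        fun i j => A i * B j,
        fun i j => mul_nonneg (hAn i) (hBn j),
        fun i => by rw [← Finset.mul_sum, Fin.sum_univ_four, hBs, mul_one],
        fun j => by rw [← Finset.sum_mul, Fin.sum_univ_four, hAs, one_mul],
        rfl⟩ (emd_lb A B)
  rw [key]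
  have e0 : |A 0 - B 0| = if B 0 ≤ A 0 then A 0 - B 0 else B 0 - A 0 := by
    split_ifs with h
    · exact abs_of_nonneg (by linarith)
    · push_neg at h
      rw [abs_of_neg (show A 0 - B 0 < 0 by linarith)]; ring
  have e1 : |A 1 - B 1| = if B 1 ≤ A 1 then A 1 - B 1 else B 1 - A 1 := by
    split_ifs with h
    · exact abs_of_nonneg (by linarith)
    · push_neg at h
      rw [abs_of_neg (show A 1 - B 1 < 0 by linarith)]; ring
  have e2 : |A 2 - B 2| = if B 2 ≤ A 2 then A 2 - B 2 else B 2 - A 2 := by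
    split_ifs with h
    · exact abs_of_nonneg (by linarith)
    · push_neg at h
      rw [abs_of_neg (show A 2 - B 2 < 0 by linarith)]; ring
  have hset : ∑ i ∈ ({0, 1, 2} : Finset (Fin 4)).filter (fun i => B i ≤ A i), (A i - B i)
      = (if B 0 ≤ A 0 then A 0 - B 0 else 0) + ((if B 1 ≤ A 1 then A 1 - B 1 else 0)
        + (if B 2 ≤ A 2 then A 2 - B 2 else 0)) := by
    rw [Finset.sum_filter, Finset.sum_insert (by decide), Finset.sum_insert (by decide),
      Finset.sum_singleton]
  rw [hset, e0, e1, e2]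
  split_ifs <;> linarith
end

section
/- Let n ≥ 1 and let SA : Fin n → Fin n be an injective sensitive-attribute map on the rows Fin n, and let 1 ≤ k ≤ n. Then: (a) a nonempty set M ⊆ Fin n of rows satisfies EMD(P(M), P(Fin n)) ≤ 1 − k/n with respect to the equal-distance metric on Fin n if and only if |M| ≥ k; consequently (b) a partition of the rows Fin n is k-anonymous (every block has size at least k) if and only if every block B of the partition satisfies EMD(P(B), P(Fin n)) ≤ 1 − k/n. -/
open Finset

def eqDist (s : ℕ) : Fin s → Fin s → ℝ := fun i j => if i = j then 0 else 1

/-- The SA distribution of a set `B` of rows, given a sensitive-attribute map `SA`. -/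
noncomputable def SAdist {n s : ℕ} (SA : Fin n → Fin s) (B : Finset (Fin n)) :
    Fin s → ℝ :=
  fun i => ((B.filter (fun r => SA r = i)).card : ℝ) / B.card

/-- `P` is a partition of the rows `Fin n`: pairwise disjoint nonempty subsets
whose union is everything. -/
def IsRowPartition {n : ℕ} (P : Finset (Finset (Fin n))) : Prop :=
  (∀ B ∈ P, B.Nonempty) ∧
  (∀ B ∈ P, ∀ B' ∈ P, B ≠ B' → Disjoint B B') ∧
  (∀ i : Fin n, ∃ B ∈ P, i ∈ B)

-- card of filter lemma
lemma filter_card {n : ℕ} (SA : Fin n → Fin n) (hSA : Function.Injective SA)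
    (B : Finset (Fin n)) (i : Fin n) :
    (B.filter (fun r => SA r = i)).card = if i ∈ B.image SA then 1 else 0 := by
  by_cases hi : i ∈ B.image SA
  · simp only [hi, if_true]
    obtain ⟨r, hr, rfl⟩ := Finset.mem_image.mp hi
    rw [Finset.card_eq_one]
    refine ⟨r, ?_⟩
    ext x
    simp only [Finset.mem_filter, Finset.mem_singleton]
    constructor
    · rintro ⟨_, h⟩; exact hSA h
    · rintro rfl; exact ⟨hr, rfl⟩
  · simp only [hi, if_false, Finset.card_eq_zero]
    ext x; simp only [Finset.mem_filter, Finset.notMem_empty, iff_false, not_and]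
    intro hx h; exact hi (Finset.mem_image.mpr ⟨x, hx, h⟩)

lemma aux_id (m n : ℝ) (hm : 0 < m) (hlt : m < n) :
    m * ((1/m - 1/n)/(n - m)) = 1/n := by
  have hn : 0 < n := lt_trans hm hlt
  have h1 : n - m ≠ 0 := by linarith
  field_simp

lemma emd_eq {n : ℕ} (hn : 1 ≤ n) (SA : Fin n → Fin n) (hSA : Function.Injective SA)
    (M : Finset (Fin n)) (hM : M.Nonempty) :
    EMD (eqDist n) (SAdist SA M) (SAdist SA Finset.univ) = 1 - (M.card : ℝ) / n := by
  set S : Finset (Fin n) := M.image SA with hS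
  have hScard : S.card = M.card := Finset.card_image_of_injective _ hSA
  set m : ℕ := M.card with hm
  have hm1 : 1 ≤ m := Finset.card_pos.mpr hM
  have hmn : m ≤ n := by
    simpa using (Finset.card_le_univ M)
  have hmr0 : (0:ℝ) < m := by exact_mod_cast hm1
  have hnr0 : (0:ℝ) < n := by exact_mod_cast hn
  have hmnr : (m:ℝ) ≤ n := by exact_mod_cast hmn
  -- distribution formulas
  have hX : ∀ i, SAdist SA M i = if i ∈ S then 1/(m:ℝ) else 0 := by
    intro i
    rw [SAdist, filter_card SA hSA]
    by_cases hi : i ∈ S <;> simp [hi, ← hS, one_div, hm]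
  have hsurj : Function.Surjective SA := Finite.injective_iff_surjective.mp hSA
  have hY : ∀ i, SAdist SA Finset.univ i = 1/(n:ℝ) := by
    intro i
    rw [SAdist, filter_card SA hSA]
    have : i ∈ Finset.univ.image SA := by
      obtain ⟨r, hr⟩ := hsurj i
      exact Finset.mem_image.mpr ⟨r, Finset.mem_univ r, hr⟩
    simp [this]
  -- cost formula
  have hcost : ∀ f : Fin n → Fin n → ℝ,
      ∑ i, ∑ j, eqDist n i j * f i j = (∑ i, ∑ j, f i j) - ∑ i, f i i := by
    intro f
    rw [← Finset.sum_sub_distrib]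
    refine Finset.sum_congr rfl fun i _ => ?_
    have : ∑ j, eqDist n i j * f i j = ∑ j, (f i j - if i = j then f i j else 0) := by
      refine Finset.sum_congr rfl fun j _ => ?_
      by_cases h : i = j <;> simp [eqDist, h]
    rw [this, Finset.sum_sub_distrib, Finset.sum_ite_eq]
    simp
  -- the witness flow
  set c : ℝ := (1/(m:ℝ) - 1/(n:ℝ))/((n:ℝ) - m) with hc
  have hc0 : 0 ≤ c := by
    apply div_nonneg
    · rw [sub_nonneg]
      exact one_div_le_one_div_of_le hmr0 hmnr
    · linarith
  set g : Fin n → Fin n → ℝ := fun i j =>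
    (if i = j then (if i ∈ S then 1/(n:ℝ) else 0) else 0) +
    (if i ∈ S ∧ j ∉ S then c else 0) with hg
  have hg0 : ∀ i j, 0 ≤ g i j := by
    intro i j
    apply add_nonneg <;> split_ifs <;> first | positivity | linarith
  have hkey : ((n:ℝ) - m) * c = 1/(m:ℝ) - 1/(n:ℝ) := by
    rcases eq_or_lt_of_le hmnr with h | h
    · rw [hc, ← h]
      simp
    · have hne : (n:ℝ) - m ≠ 0 := by
        have : (m:ℝ) < n := by exact_mod_cast h
        linarith
      rw [hc, mul_comm]
      exact div_mul_cancel₀ _ hne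
  have hrow : ∀ i, ∑ j, g i j = SAdist SA M i := by
    intro i
    rw [hX i]
    have h1 : ∑ j, (if i = j then (if i ∈ S then 1/(n:ℝ) else 0) else 0)
        = (if i ∈ S then 1/(n:ℝ) else 0) := by
      rw [Finset.sum_ite_eq]; simp
    have h2 : ∑ j, (if i ∈ S ∧ j ∉ S then c else 0)
        = if i ∈ S then ((n:ℝ) - m) * c else 0 := by
      by_cases hi : i ∈ S
      · simp only [hi, true_and, if_true]
        have hcc : (Finset.univ.filter (fun j => j ∉ S)).card = n - m := by
          rw [Finset.filter_not, Finset.filter_mem_eq_inter, Finset.univ_inter,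
            Finset.card_sdiff_of_subset (Finset.subset_univ S), hScard]
          simp
        rw [Finset.sum_ite, Finset.sum_const, Finset.sum_const, smul_zero, add_zero,
          hcc, nsmul_eq_mul, Nat.cast_sub hmn]
      · simp [hi]
    simp only [hg, Finset.sum_add_distrib, h1, h2]
    by_cases hi : i ∈ S
    · simp only [hi, if_true, hkey]; ring
    · simp [hi]
  have hcol : ∀ j, ∑ i, g i j = SAdist SA Finset.univ j := by
    intro j
    rw [hY j]
    have h1 : ∑ i, (if i = j then (if i ∈ S then 1/(n:ℝ) else 0) else 0)
        = (if j ∈ S then 1/(n:ℝ) else 0) := by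
      rw [Finset.sum_ite_eq']; simp
    have h2 : ∑ i, (if i ∈ S ∧ j ∉ S then c else 0)
        = if j ∉ S then (m:ℝ) * c else 0 := by
      by_cases hj : j ∈ S
      · simp [hj]
      · simp only [hj, not_false_iff, and_true, if_true]
        rw [Finset.sum_ite, Finset.sum_const, Finset.sum_const, smul_zero, add_zero,
          Finset.filter_mem_eq_inter, Finset.univ_inter, hScard, nsmul_eq_mul]
    simp only [hg, Finset.sum_add_distrib, h1, h2]
    by_cases hj : j ∈ S
    · simp [hj]
    · -- j ∉ S, so m < n
      have hmltn : m < n := by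
        rcases eq_or_lt_of_le hmn with h | h
        · exfalso
          apply hj
          have : S = Finset.univ := Finset.eq_univ_of_card S (by rw [hScard, h]; simp)
          rw [this]; exact Finset.mem_univ j
        · exact h
      have hne : (n:ℝ) - m ≠ 0 := by
        have : (m:ℝ) < n := by exact_mod_cast hmltn
        linarith
      have hmlt : (m:ℝ) < n := by exact_mod_cast hmltn
      simp only [hj, if_false, not_false_iff, if_true, zero_add]
      rw [hc]
      exact aux_id _ _ hmr0 hmlt
  have hdiag : ∑ i, g i i = (m:ℝ)/n := by
    have : ∀ i, g i i = if i ∈ S then 1/(n:ℝ) else 0 := by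
      intro i
      simp [hg]
    simp only [this]
    rw [Finset.sum_ite, Finset.sum_const, Finset.sum_const, smul_zero, add_zero,
      Finset.filter_mem_eq_inter, Finset.univ_inter, hScard, nsmul_eq_mul, mul_one_div]
  have htot : ∑ i, ∑ j, g i j = 1 := by
    simp only [hrow, hX]
    rw [Finset.sum_ite, Finset.sum_const, Finset.sum_const, smul_zero, add_zero,
      Finset.filter_mem_eq_inter, Finset.univ_inter, hScard, nsmul_eq_mul, mul_one_div,
      div_self hmr0.ne']
  have hgcost : ∑ i, ∑ j, eqDist n i j * g i j = 1 - (m:ℝ)/n := by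
    rw [hcost, htot, hdiag]
  set 𝒮 := { x : ℝ | ∃ f : Fin n → Fin n → ℝ,
    (∀ i j, 0 ≤ f i j) ∧ (∀ i, ∑ j, f i j = SAdist SA M i) ∧
    (∀ j, ∑ i, f i j = SAdist SA Finset.univ j) ∧
    x = ∑ i, ∑ j, eqDist n i j * f i j } with h𝒮
  have hmem : (1 - (m:ℝ)/n) ∈ 𝒮 := ⟨g, hg0, hrow, hcol, hgcost.symm⟩
  have hlb : ∀ x ∈ 𝒮, 1 - (m:ℝ)/n ≤ x := by
    rintro x ⟨f, hf0, hfr, hfc, rfl⟩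
    rw [hcost]
    have h1 : ∑ i, ∑ j, f i j = 1 := by
      simp only [hfr, hX]
      rw [Finset.sum_ite, Finset.sum_const, Finset.sum_const, smul_zero, add_zero,
        Finset.filter_mem_eq_inter, Finset.univ_inter, hScard, nsmul_eq_mul, mul_one_div,
        div_self hmr0.ne']
    have h2 : ∑ i, f i i ≤ (m:ℝ)/n := by
      have hb : ∀ i, f i i ≤ if i ∈ S then 1/(n:ℝ) else 0 := by
        intro i
        by_cases hi : i ∈ S
        · simp only [hi, if_true]
          calc f i i ≤ ∑ i', f i' i :=
                Finset.single_le_sum (fun i' _ => hf0 i' i) (Finset.mem_univ i)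
            _ = 1/(n:ℝ) := by rw [hfc, hY]
        · simp only [hi, if_false]
          calc f i i ≤ ∑ j, f i j :=
                Finset.single_le_sum (fun j _ => hf0 i j) (Finset.mem_univ i)
            _ = 0 := by rw [hfr, hX]; simp [hi]
      calc ∑ i, f i i ≤ ∑ i, (if i ∈ S then 1/(n:ℝ) else 0) :=
            Finset.sum_le_sum (fun i _ => hb i)
        _ = (m:ℝ)/n := by
            rw [Finset.sum_ite, Finset.sum_const, Finset.sum_const, smul_zero, add_zero,
              Finset.filter_mem_eq_inter, Finset.univ_inter, hScard, nsmul_eq_mul, mul_one_div]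
    rw [h1]
    linarith
  have hbdd : BddBelow 𝒮 := ⟨1 - (m:ℝ)/n, hlb⟩
  rw [EMD]
  exact le_antisymm (csInf_le hbdd hmem) (le_csInf ⟨_, hmem⟩ hlb)

theorem stmt3 (n k : ℕ) (hn : 1 ≤ n) (SA : Fin n → Fin n)
    (hSA : Function.Injective SA) (hk : 1 ≤ k) (hkn : k ≤ n) :
    (∀ M : Finset (Fin n), M.Nonempty →
      (EMD (eqDist n) (SAdist SA M) (SAdist SA Finset.univ) ≤ 1 - (k : ℝ) / n ↔
        k ≤ M.card)) ∧
    (∀ P : Finset (Finset (Fin n)), IsRowPartition P →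
      ((∀ B ∈ P, k ≤ B.card) ↔
        ∀ B ∈ P, EMD (eqDist n) (SAdist SA B) (SAdist SA Finset.univ) ≤ 1 - (k : ℝ) / n)) := by
  have hnr0 : (0:ℝ) < n := by exact_mod_cast hn
  have ha : ∀ M : Finset (Fin n), M.Nonempty →
      (EMD (eqDist n) (SAdist SA M) (SAdist SA Finset.univ) ≤ 1 - (k : ℝ) / n ↔
        k ≤ M.card) := by
    intro M hM
    rw [emd_eq hn SA hSA M hM]
    constructor
    · intro h
      have : (k:ℝ) ≤ M.card := by
        rw [← div_le_div_iff_of_pos_right hnr0]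
        linarith
      exact_mod_cast this
    · intro h
      have : (k:ℝ) ≤ M.card := by exact_mod_cast h
      have h2 : (k:ℝ)/n ≤ (M.card:ℝ)/n :=
        div_le_div_of_nonneg_right (c := (n:ℝ)) this hnr0.le
      linarith
  refine ⟨ha, fun P hP => ⟨fun h B hB => (ha B (hP.1 B hB)).mpr (h B hB),
    fun h B hB => (ha B (hP.1 B hB)).mp (h B hB)⟩⟩
end

section
/- Let G be a simple graph on vertex set Fin n with n ≥ 2, and let T be its incidence table. Then for every set W ⊆ Fin n of rows with |W| ≥ 2, the suppression cost of W equals |W| · |{e ∈ E(G) : e has at least one endpoint in W}|. -/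
open Finset

attribute [local instance] Classical.propDecidable

/-- The suppression cost of a set `B` of rows of table `T`: `|B|` times the number
of columns on which not all rows of `B` agree. -/
noncomputable def suppCost {n : ℕ} {ι α : Type*} [Fintype ι]
    (T : Fin n → ι → α) (B : Finset (Fin n)) : ℕ :=
  B.card *
    (Finset.univ.filter (fun j : ι => ¬ ∀ i ∈ B, ∀ i' ∈ B, T i j = T i' j)).card

theorem stmt4 (n : ℕ) (hn : 2 ≤ n) (G : SimpleGraph (Fin n)) [DecidableRel G.Adj]
    (W : Finset (Fin n)) (hW : 2 ≤ W.card) :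
    suppCost
        (fun (i : Fin n) (e : G.edgeFinset) =>
          if i ∈ (e : Sym2 (Fin n)) then (i : ℕ) + 1 else 0) W
      = W.card * (G.edgeFinset.filter (fun e => ∃ v ∈ W, v ∈ e)).card := by
  unfold suppCost
  congr 1
  refine Finset.card_bij (fun e _ => (e : Sym2 (Fin n))) ?_ ?_ ?_
  · rintro ⟨e, he⟩ hmem
    simp only [Finset.mem_filter, Finset.mem_univ, true_and] at hmem ⊢
    refine ⟨he, ?_⟩
    by_contra h
    push_neg at h
    apply hmem
    intro i hi i' hi'
    simp [h i hi, h i' hi']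
  · intro a₁ _ a₂ _ h
    exact Subtype.ext h
  · intro e he
    simp only [Finset.mem_filter] at he
    obtain ⟨heE, v, hvW, hve⟩ := he
    refine ⟨⟨e, heE⟩, ?_, rfl⟩
    simp only [Finset.mem_filter, Finset.mem_univ, true_and]
    intro hall
    obtain ⟨w, hwW, hwv⟩ : ∃ w ∈ W, w ≠ v := by
      by_contra h
      push_neg at h
      have : W ⊆ {v} := fun x hx => Finset.mem_singleton.mpr (h x hx)
      have := Finset.card_le_card this
      simp at this
      omega
    have := hall v hvW w hwW
    simp only [hve, if_pos] at this
    by_cases hwe : w ∈ e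
    · rw [if_pos hwe] at this
      exact hwv (Fin.ext (by omega)).symm
    · rw [if_neg hwe] at this
      omega
end

section
/- Let n ≥ 4 be even and let G be a simple graph on vertex set Fin n with edge set E(G); let T be its incidence table. Then the minimum, over all (n/2)-anonymous partitions P of the rows of T, of cost(P) equals (n/2)·(|E(G)| + b), where b is the minimum, over all partitions of Fin n into two sets V₁ and V₂ each of size n/2, of the number of edges of G having one endpoint in V₁ and the other in V₂. -/
open Finset

attribute [local instance] Classical.propDecidable

/-- The cost of a partition: the sum of the suppression costs of its blocks. -/
noncomputable def partCost {n : ℕ} {ι α : Type*} [Fintype ι]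
    (T : Fin n → ι → α) (P : Finset (Finset (Fin n))) : ℕ :=
  ∑ B ∈ P, suppCost T B

lemma card_filter_subtype {α : Type*} [DecidableEq α] (s : Finset α) (p : α → Prop) :
    (Finset.univ.filter (fun j : s => p ↑j)).card = (s.filter p).card := by
  apply Finset.card_bij (fun (j : s) _ => (j : α))
  · intro j hj
    simp only [mem_filter, mem_univ, true_and] at hj
    exact Finset.mem_filter.2 ⟨j.2, hj⟩
  · intro a ha b hb h
    exact Subtype.ext h
  · intro a ha
    obtain ⟨h1, h2⟩ := Finset.mem_filter.1 ha
    exact ⟨⟨a, h1⟩, by simpa using h2, rfl⟩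

lemma notall_iff {n : ℕ} (B : Finset (Fin n)) (hB : 2 ≤ B.card) (e : Sym2 (Fin n)) :
    (¬ ∀ i ∈ B, ∀ i' ∈ B,
        (if i ∈ e then (i : ℕ) + 1 else 0) = (if i' ∈ e then (i' : ℕ) + 1 else 0))
      ↔ ∃ i ∈ B, i ∈ e := by
  constructor
  · intro h
    by_contra hc
    push_neg at hc
    exact h fun i hi i' hi' => by rw [if_neg (hc i hi), if_neg (hc i' hi')]
  · rintro ⟨i, hi, hie⟩ hall
    have h1 : 1 < B.card := by omega
    obtain ⟨i', hi', hne⟩ := Finset.exists_mem_ne h1 i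
    have := hall i hi i' hi'
    rw [if_pos hie] at this
    by_cases h' : i' ∈ e
    · rw [if_pos h'] at this
      exact hne (Fin.ext (by omega)).symm
    · rw [if_neg h'] at this; omega

lemma suppCost_eq {n : ℕ} (G : SimpleGraph (Fin n)) [DecidableRel G.Adj]
    (B : Finset (Fin n)) (hB : 2 ≤ B.card) :
    suppCost (fun (i : Fin n) (e : G.edgeFinset) =>
        if i ∈ (e : Sym2 (Fin n)) then (i : ℕ) + 1 else 0) B
      = B.card * (G.edgeFinset.filter (fun e => ∃ i ∈ B, i ∈ e)).card := by
  unfold suppCost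
  congr 1
  apply Finset.card_bij (fun (j : G.edgeFinset) _ => (j : Sym2 (Fin n)))
  · intro j hj
    simp only [Finset.mem_filter, Finset.mem_univ, true_and] at hj
    simp only [Finset.mem_filter]
    exact ⟨j.2, (notall_iff B hB j).1 hj⟩
  · intro a ha b hb hab
    exact Subtype.ext hab
  · intro e he
    simp only [Finset.mem_filter] at he
    refine ⟨⟨e, he.1⟩, ?_, rfl⟩
    simp only [Finset.mem_filter, Finset.mem_univ, true_and]
    exact (notall_iff B hB e).2 he.2

lemma touch_cut {n : ℕ} (G : SimpleGraph (Fin n)) [DecidableRel G.Adj]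
    (B : Finset (Fin n)) :
    (G.edgeFinset.filter (fun e => ∃ i ∈ B, i ∈ e)).card
      + (G.edgeFinset.filter (fun e => ∃ i ∈ Bᶜ, i ∈ e)).card
    = G.edgeFinset.card
      + (G.edgeFinset.filter (fun e => ∃ u ∈ B, ∃ v ∈ Bᶜ, e = s(u, v))).card := by
  rw [← Finset.card_union_add_card_inter]
  congr 1
  · rw [← Finset.filter_or]
    apply congrArg Finset.card
    apply Finset.filter_true_of_mem
    intro e he
    induction e using Sym2.ind with
    | _ x y =>
      by_cases hx : x ∈ B
      · exact Or.inl ⟨x, hx, Sym2.mem_mk_left x y⟩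
      · exact Or.inr ⟨x, Finset.mem_compl.2 hx, Sym2.mem_mk_left x y⟩
  · rw [← Finset.filter_and]
    apply congrArg Finset.card
    apply Finset.filter_congr
    intro e he
    constructor
    · rintro ⟨⟨u, hu, hue⟩, ⟨v, hv, hve⟩⟩
      have hne : u ≠ v := fun h => (Finset.mem_compl.1 hv) (h ▸ hu)
      refine ⟨u, hu, v, hv, ?_⟩
      induction e using Sym2.ind with
      | _ x y =>
        rw [Sym2.mem_iff] at hue hve
        rcases hue with rfl | rfl <;> rcases hve with rfl | rfl
        · exact absurd rfl hne
        · rfl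
        · exact Sym2.eq_swap
        · exact absurd rfl hne
    · rintro ⟨u, hu, v, hv, rfl⟩
      exact ⟨⟨u, hu, Sym2.mem_mk_left u v⟩, ⟨v, hv, Sym2.mem_mk_right u v⟩⟩

lemma partition_cases {n k : ℕ} (hk : 0 < k) (hnk : n = 2 * k)
    (P : Finset (Finset (Fin n))) (hP : IsRowPartition P)
    (hcard : ∀ B ∈ P, k ≤ B.card) :
    P = {Finset.univ} ∨ ∃ B : Finset (Fin n), B.card = k ∧ P = {B, Bᶜ} := by
  obtain ⟨hne, hdisj, hcov⟩ := hP
  have hunion : P.biUnion (fun x => x) = Finset.univ := by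
    ext i
    simp only [Finset.mem_biUnion, Finset.mem_univ, iff_true]
    exact hcov i
  have hsum : ∑ B ∈ P, B.card = n := by
    rw [← Finset.card_biUnion hdisj, hunion, Finset.card_univ, Fintype.card_fin]
  have hPne : P.Nonempty := by
    obtain ⟨B, hB, _⟩ := hcov ⟨0, by omega⟩
    exact ⟨B, hB⟩
  have hPk : P.card * k ≤ n := by
    calc P.card * k = P.card • k := rfl
    _ ≤ ∑ B ∈ P, B.card := Finset.card_nsmul_le_sum P _ k hcard
    _ = n := hsum
  have hP2 : P.card ≤ 2 := by
    by_contra h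
    push_neg at h
    have : 3 * k ≤ P.card * k := Nat.mul_le_mul_right k h
    omega
  have hP1 : 1 ≤ P.card := Finset.card_pos.2 hPne
  have h12 : P.card = 1 ∨ P.card = 2 := by omega
  rcases h12 with h | h
  · left
    obtain ⟨B, rfl⟩ := Finset.card_eq_one.1 h
    have hBu : B = Finset.univ := Finset.eq_univ_iff_forall.2 (fun i => by
      obtain ⟨B', hB', hi⟩ := hcov i
      rwa [Finset.mem_singleton.1 hB'] at hi)
    rw [hBu]
  · right
    obtain ⟨B₁, B₂, hne12, rfl⟩ := Finset.card_eq_two.1 h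
    have h1 : B₁ ∈ ({B₁, B₂} : Finset (Finset (Fin n))) := by simp
    have h2 : B₂ ∈ ({B₁, B₂} : Finset (Finset (Fin n))) := by simp
    have hd : Disjoint B₁ B₂ := hdisj B₁ h1 B₂ h2 hne12
    have hs : B₁.card + B₂.card = n := by
      rw [← Finset.sum_pair hne12]; exact hsum
    have hc1 : B₁.card = k := by
      have := hcard B₁ h1; have := hcard B₂ h2; omega
    refine ⟨B₁, hc1, ?_⟩
    have : B₂ = B₁ᶜ := by
      apply Finset.eq_of_subset_of_card_le
      · intro i hi
        exact Finset.mem_compl.2 fun hi1 => (Finset.disjoint_left.1 hd hi1) hi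
      · rw [Finset.card_compl, Fintype.card_fin]; omega
    rw [this]section
variable {n : ℕ}

theorem stmt5 (n : ℕ) (hn : 4 ≤ n) (hev : Even n)
    (G : SimpleGraph (Fin n)) [DecidableRel G.Adj] :
    sInf {c : ℕ | ∃ P : Finset (Finset (Fin n)), IsRowPartition P ∧
        (∀ B ∈ P, n / 2 ≤ B.card) ∧
        partCost
          (fun (i : Fin n) (e : G.edgeFinset) =>
            if i ∈ (e : Sym2 (Fin n)) then (i : ℕ) + 1 else 0) P = c}
      = (n / 2) *
        (G.edgeFinset.card +
          sInf {b : ℕ | ∃ V₁ : Finset (Fin n), V₁.card = n / 2 ∧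
            b = (G.edgeFinset.filter
                  (fun e => ∃ u ∈ V₁, ∃ v ∈ V₁ᶜ, e = s(u, v))).card}) := by
  obtain ⟨m, hm⟩ := hev
  have hnm : n = 2 * m := by omega
  have hkm : n / 2 = m := by omega
  set T := fun (i : Fin n) (e : G.edgeFinset) =>
      if i ∈ (e : Sym2 (Fin n)) then (i : ℕ) + 1 else 0 with hT
  set Sb := {b : ℕ | ∃ V₁ : Finset (Fin n), V₁.card = n / 2 ∧
      b = (G.edgeFinset.filter
            (fun e => ∃ u ∈ V₁, ∃ v ∈ V₁ᶜ, e = s(u, v))).card} with hSb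
  -- nonemptiness of Sb
  have hbne : Sb.Nonempty := by
    obtain ⟨V, _, hVcard⟩ := Finset.exists_subset_card_eq (s := (Finset.univ : Finset (Fin n)))
      (n := n / 2) (by rw [Finset.card_univ, Fintype.card_fin]; omega)
    exact ⟨_, V, hVcard, rfl⟩
  obtain ⟨V₁, hV₁, hbeq⟩ := Nat.sInf_mem hbne
  set b := sInf Sb with hbdef
  -- cost of a pair partition
  have costpair : ∀ B : Finset (Fin n), B.card = n / 2 →
      partCost T {B, Bᶜ} = (n / 2) * (G.edgeFinset.card +
        (G.edgeFinset.filter (fun e => ∃ u ∈ B, ∃ v ∈ Bᶜ, e = s(u, v))).card) := by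
    intro B hBc
    have hcc : Bᶜ.card = n / 2 := by
      rw [Finset.card_compl, Fintype.card_fin]; omega
    have hneB : B ≠ Bᶜ := by
      intro h
      obtain ⟨i, hi⟩ := Finset.card_pos.1 (show 0 < B.card by omega)
      exact (Finset.mem_compl.1 (h ▸ hi)) hi
    unfold partCost
    rw [Finset.sum_pair hneB, suppCost_eq G B (by omega), suppCost_eq G Bᶜ (by omega),
      hBc, hcc, ← Nat.left_distrib, touch_cut]
  -- cost of the trivial partition
  have costuniv : partCost T {Finset.univ} = n * G.edgeFinset.card := by
    unfold partCost
    rw [Finset.sum_singleton, suppCost_eq G Finset.univ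
      (by rw [Finset.card_univ, Fintype.card_fin]; omega),
      Finset.card_univ, Fintype.card_fin]
    congr 1
    rw [Finset.filter_true_of_mem]
    intro e _
    induction e using Sym2.ind with
    | _ x y => exact ⟨x, Finset.mem_univ x, Sym2.mem_mk_left x y⟩
  have hVc : V₁ᶜ.card = n / 2 := by rw [Finset.card_compl, Fintype.card_fin]; omega
  have hneV : V₁ ≠ V₁ᶜ := by
    intro h
    obtain ⟨i, hi⟩ := Finset.card_pos.1 (show 0 < V₁.card by omega)
    exact (Finset.mem_compl.1 (h ▸ hi)) hi
  -- membership of the claimed value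
  have hmem : ∃ P : Finset (Finset (Fin n)), IsRowPartition P ∧
      (∀ B ∈ P, n / 2 ≤ B.card) ∧
      partCost T P = (n / 2) * (G.edgeFinset.card + b) := by
    refine ⟨{V₁, V₁ᶜ}, ⟨?_, ?_, ?_⟩, ?_, ?_⟩
    · intro B hB
      rcases Finset.mem_insert.1 hB with rfl | hB
      · exact Finset.card_pos.1 (by omega)
      · rw [Finset.mem_singleton.1 hB]
        exact Finset.card_pos.1 (by omega)
    · intro B hB B' hB' hne
      rcases Finset.mem_insert.1 hB with rfl | hB <;>
        rcases Finset.mem_insert.1 hB' with h' | h'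
      · exact absurd h'.symm hne
      · rw [Finset.mem_singleton.1 h']; exact disjoint_compl_right
      · rw [Finset.mem_singleton.1 hB, h']; exact disjoint_compl_left
      · rw [Finset.mem_singleton.1 hB, Finset.mem_singleton.1 h'] at hne
        exact absurd rfl hne
    · intro i
      by_cases hi : i ∈ V₁
      · exact ⟨V₁, by simp, hi⟩
      · exact ⟨V₁ᶜ, by simp, Finset.mem_compl.2 hi⟩
    · intro B hB
      rcases Finset.mem_insert.1 hB with rfl | hB
      · omega
      · rw [Finset.mem_singleton.1 hB]; omega
    · rw [costpair V₁ hV₁, ← hbeq]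
  -- lower bound
  have hlow : ∀ c ∈ {c : ℕ | ∃ P : Finset (Finset (Fin n)), IsRowPartition P ∧
      (∀ B ∈ P, n / 2 ≤ B.card) ∧ partCost T P = c},
      (n / 2) * (G.edgeFinset.card + b) ≤ c := by
    rintro c ⟨P, hP, hk, rfl⟩
    rcases partition_cases (k := n / 2) (by omega) (by omega) P hP hk with rfl | ⟨B, hBc, rfl⟩
    · rw [costuniv]
      have hb_le : b ≤ G.edgeFinset.card := hbeq ▸ Finset.card_filter_le _ _
      have h1 : (n / 2) * (G.edgeFinset.card + b)
          ≤ (n / 2) * (G.edgeFinset.card + G.edgeFinset.card) :=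
        Nat.mul_le_mul_left _ (by omega)
      have h2 : (n / 2) * (G.edgeFinset.card + G.edgeFinset.card)
          = n * G.edgeFinset.card := by
        rw [← Nat.two_mul, ← Nat.mul_assoc]
        congr 1
        omega
      exact h1.trans h2.le
    · rw [costpair B hBc]
      have : b ≤ (G.edgeFinset.filter (fun e => ∃ u ∈ B, ∃ v ∈ Bᶜ, e = s(u, v))).card :=
        Nat.sInf_le ⟨B, hBc, rfl⟩
      exact Nat.mul_le_mul_left _ (by omega)
  refine le_antisymm (Nat.sInf_le hmem) ?_
  have hne' : {c : ℕ | ∃ P : Finset (Finset (Fin n)), IsRowPartition P ∧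
      (∀ B ∈ P, n / 2 ≤ B.card) ∧ partCost T P = c}.Nonempty := ⟨_, hmem⟩
  exact hlow _ (Nat.sInf_mem hne')
end

section
/- Let T : Fin n → Fin m → Σ be a table with n ≥ 4 even and m ≥ 1, let c be a rational number with 0 < c ≤ 1/3 such that n' := n/(2c) is an integer, and let λ₁, λ₂ be two symbols not in Σ. Define the table T' : Fin n' → Fin (m + n·m) → (Σ ∪ {λ₁, λ₂}) by: for rows i < n, T'(i)(j) = T(i)(j) for columns j < m and T'(i)(j) = λ₁ for columns j ≥ m; for rows n ≤ i < n', T'(i)(j) = λ₂ for all columns j. Then the minimum cost of an (n/2)-anonymous partition of T' (note that c·n' = n/2) equals the minimum cost of an (n/2)-anonymous partition of T. -/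
open Finset

attribute [local instance] Classical.propDecidable

/-- The extended table `T'` of the reduction: rows `i < n` keep `T` on the first `m`
columns and carry the fresh symbol `λ₁ = Sum.inr 0` on the remaining `n·m` columns;
rows `n ≤ i < n'` are constantly the fresh symbol `λ₂ = Sum.inr 1`. -/
def extTable {σ : Type*} {n m : ℕ} (T : Fin n → Fin m → σ) (n' : ℕ) :
    Fin n' → Fin (m + n * m) → σ ⊕ Fin 2 :=
  fun i j =>
    if h : (i : ℕ) < n then
      if h' : (j : ℕ) < m then Sum.inl (T ⟨i, h⟩ ⟨j, h'⟩) else Sum.inr 0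
    else Sum.inr 1

/-! ### Auxiliary lemmas -/

/-- The embedding of the original rows in the extended row type. -/
def lowEmb {n n' : ℕ} (h : n ≤ n') : Fin n ↪ Fin n' :=
  ⟨Fin.castLE h, Fin.castLE_injective h⟩

lemma suppCost_eq_s6 {n : ℕ} {ι α : Type*} [Fintype ι]
    (T : Fin n → ι → α) (B : Finset (Fin n)) (k : ℕ)
    (hk : ∀ D : Finset ι, (∀ j, j ∈ D ↔ ¬ ∀ i ∈ B, ∀ i' ∈ B, T i j = T i' j) → D.card = k) :
    suppCost T B = B.card * k := by
  unfold suppCost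
  congr 1
  exact hk _ (fun j => by simp [Finset.mem_filter])

lemma suppCost_le {n : ℕ} {ι α : Type*} [Fintype ι]
    (T : Fin n → ι → α) (B : Finset (Fin n)) :
    suppCost T B ≤ B.card * Fintype.card ι := by
  unfold suppCost
  exact Nat.mul_le_mul_left _ (le_trans (Finset.card_filter_le _ _) (by simp))

lemma extTable_lowlow {σ : Type*} {n m n' : ℕ} (h : n ≤ n') (T : Fin n → Fin m → σ)
    (a : Fin n) (j : Fin (m + n * m)) (hj : (j : ℕ) < m) :
    extTable T n' (Fin.castLE h a) j = Sum.inl (T a ⟨j, hj⟩) := by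
  have h1 : ((Fin.castLE h a : Fin n') : ℕ) < n := by simpa using a.isLt
  simp only [extTable, dif_pos h1, dif_pos hj]
  congr 1

lemma extTable_lowhigh {σ : Type*} {n m n' : ℕ} (T : Fin n → Fin m → σ)
    (i : Fin n') (hi : (i : ℕ) < n) (j : Fin (m + n * m)) (hj : ¬ (j : ℕ) < m) :
    extTable T n' i j = Sum.inr 0 := by
  simp only [extTable, dif_pos hi, dif_neg hj]

lemma extTable_high {σ : Type*} {n m n' : ℕ} (T : Fin n → Fin m → σ)
    (i : Fin n') (hi : ¬ (i : ℕ) < n) (j : Fin (m + n * m)) :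
    extTable T n' i j = Sum.inr 1 := by
  simp only [extTable, dif_neg hi]

lemma suppCost_high {σ : Type*} {n m n' : ℕ}
    (T : Fin n → Fin m → σ) (B : Finset (Fin n'))
    (hB : ∀ i ∈ B, ¬ (i : ℕ) < n) :
    suppCost (extTable T n') B = 0 := by
  have := suppCost_eq_s6 (extTable T n') B 0 (fun D hD => by
    rw [Finset.card_eq_zero, Finset.eq_empty_iff_forall_notMem]
    intro j hj
    exact (hD j).mp hj (fun i hi i' hi' => by
      rw [extTable_high T i (hB i hi), extTable_high T i' (hB i' hi')]))
  omega

lemma suppCost_mixed {σ : Type*} {n m n' : ℕ}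
    (T : Fin n → Fin m → σ) (B : Finset (Fin n'))
    (i : Fin n') (hi : i ∈ B) (hilow : (i : ℕ) < n)
    (i' : Fin n') (hi' : i' ∈ B) (hihigh : ¬ (i' : ℕ) < n) :
    suppCost (extTable T n') B = B.card * (m + n * m) := by
  apply suppCost_eq_s6
  intro D hD
  have : D = Finset.univ := by
    rw [Finset.eq_univ_iff_forall]
    intro j
    rw [hD j]
    intro hall
    have heq := hall i hi i' hi'
    rw [extTable_high T i' hihigh] at heq
    by_cases hj : (j : ℕ) < m
    · rw [extTable, dif_pos hilow, dif_pos hj] at heq; simp at heq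
    · rw [extTable_lowhigh T i hilow j hj] at heq; simp [Fin.ext_iff] at heq
  rw [this, Finset.card_univ, Fintype.card_fin]

lemma suppCost_low {σ : Type*} {n m n' : ℕ} (h : n ≤ n')
    (T : Fin n → Fin m → σ) (C : Finset (Fin n)) :
    suppCost (extTable T n') (C.map (lowEmb h)) = suppCost T C := by
  classical
  set bad : Finset (Fin m) :=
    Finset.univ.filter (fun j => ¬ ∀ i ∈ C, ∀ i' ∈ C, T i j = T i' j) with hbad
  have hemb2 : Function.Injective
      (fun b : Fin m => (⟨(b : ℕ), lt_of_lt_of_le b.isLt (Nat.le_add_right _ _)⟩ :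
        Fin (m + n * m))) :=
    fun a b hab => Fin.ext (by simpa using congrArg Fin.val hab)
  have h2 : suppCost T C = C.card * bad.card := by
    apply suppCost_eq_s6
    intro D hD
    congr 1
    ext j
    rw [hD j, hbad]
    simp [Finset.mem_filter]
  have h1 : suppCost (extTable T n') (C.map (lowEmb h))
      = (C.map (lowEmb h)).card * (bad.map ⟨_, hemb2⟩).card := by
    apply suppCost_eq_s6
    intro D hD
    congr 1
    ext j
    rw [hD j]
    simp only [Finset.mem_map, Function.Embedding.coeFn_mk, lowEmb]
    constructor
    · intro hj
      have hjm : (j : ℕ) < m := by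
        by_contra hge
        apply hj
        intro i hi i' hi'
        obtain ⟨a, _, rfl⟩ := hi
        obtain ⟨a', _, rfl⟩ := hi'
        rw [extTable_lowhigh T _ (by simpa using a.isLt) _ hge,
          extTable_lowhigh T _ (by simpa using a'.isLt) _ hge]
      refine ⟨⟨(j : ℕ), hjm⟩, ?_, Fin.ext rfl⟩
      rw [hbad]
      simp only [Finset.mem_filter, Finset.mem_univ, true_and]
      intro hall
      apply hj
      intro i hi i' hi'
      obtain ⟨a, ha, rfl⟩ := hi
      obtain ⟨a', ha', rfl⟩ := hi'
      rw [extTable_lowlow h T a j hjm, extTable_lowlow h T a' j hjm]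
      exact congrArg Sum.inl (hall a ha a' ha')
    · rintro ⟨b, hb, rfl⟩
      rw [hbad] at hb
      simp only [Finset.mem_filter, Finset.mem_univ, true_and] at hb
      intro hall
      apply hb
      intro a ha a' ha'
      have heq := hall (Fin.castLE h a) ⟨a, ha, rfl⟩ (Fin.castLE h a') ⟨a', ha', rfl⟩
      have hbm : ((⟨(b : ℕ), lt_of_lt_of_le b.isLt (Nat.le_add_right _ _)⟩ :
          Fin (m + n * m)) : ℕ) < m := b.isLt
      rw [extTable_lowlow h T a _ hbm, extTable_lowlow h T a' _ hbm] at heq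
      have : T a ⟨_, hbm⟩ = T a' ⟨_, hbm⟩ := by simpa using heq
      simpa using this
  rw [h1, h2, Finset.card_map, Finset.card_map]

theorem stmt6 {σ : Type*} (n m : ℕ) (hn : 4 ≤ n) (hev : Even n) (hm : 1 ≤ m)
    (T : Fin n → Fin m → σ) (c : ℚ) (hc0 : 0 < c) (hc1 : c ≤ 1 / 3)
    (n' : ℕ) (hn' : (n' : ℚ) = (n : ℚ) / (2 * c)) :
    sInf {k : ℕ | ∃ P : Finset (Finset (Fin n')), IsRowPartition P ∧
        (∀ B ∈ P, n / 2 ≤ B.card) ∧ partCost (extTable T n') P = k}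
      = sInf {k : ℕ | ∃ P : Finset (Finset (Fin n)), IsRowPartition P ∧
          (∀ B ∈ P, n / 2 ≤ B.card) ∧ partCost T P = k} := by
  classical
  -- numerics
  have hn'3 : 3 * n ≤ 2 * n' := by
    have hmul : (n' : ℚ) * (2 * c) = n := by
      rw [hn']; field_simp
    have hnq : (0 : ℚ) ≤ (n' : ℚ) := by positivity
    have : (3 * n : ℚ) ≤ 2 * n' := by nlinarith
    exact_mod_cast this
  have hle : n ≤ n' := by omega
  have hlt : n < n' := by omega
  obtain ⟨t, ht⟩ := hev
  have hhalf : n / 2 + n / 2 = n := by omega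
  set S' : Set ℕ := {k : ℕ | ∃ P : Finset (Finset (Fin n')), IsRowPartition P ∧
      (∀ B ∈ P, n / 2 ≤ B.card) ∧ partCost (extTable T n') P = k} with hS'def
  set S : Set ℕ := {k : ℕ | ∃ P : Finset (Finset (Fin n)), IsRowPartition P ∧
      (∀ B ∈ P, n / 2 ≤ B.card) ∧ partCost T P = k} with hSdef
  -- the block of high rows
  set H : Finset (Fin n') := Finset.univ.filter (fun i => ¬ (i : ℕ) < n) with hHdef
  have hHmem : ∀ i : Fin n', i ∈ H ↔ ¬ (i : ℕ) < n := fun i => by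
    rw [hHdef]; simp
  have hHcard : H.card = n' - n := by
    have hlow : (Finset.univ.filter (fun i : Fin n' => (i : ℕ) < n)).card = n := by
      have : Finset.univ.filter (fun i : Fin n' => (i : ℕ) < n)
          = Finset.univ.map (lowEmb hle) := by
        ext i
        simp only [Finset.mem_filter, Finset.mem_univ, true_and, Finset.mem_map, lowEmb,
          Function.Embedding.coeFn_mk]
        constructor
        · intro hi; exact ⟨⟨i, hi⟩, Fin.ext rfl⟩
        · rintro ⟨a, _, rfl⟩; simpa using a.isLt
      rw [this, Finset.card_map, Finset.card_univ, Fintype.card_fin]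
    have := Finset.card_filter_add_card_filter_not
      (s := (Finset.univ : Finset (Fin n'))) (p := fun i : Fin n' => (i : ℕ) < n)
    rw [Finset.card_univ, Fintype.card_fin] at this
    rw [hHdef]
    omega
  have hHne : H.Nonempty := Finset.card_pos.mp (by omega)
  have hHhalf : n / 2 ≤ H.card := by omega
  -- membership in mapped blocks
  have hmapmem : ∀ (C : Finset (Fin n)) (i : Fin n'),
      i ∈ C.map (lowEmb hle) ↔ ∃ a ∈ C, Fin.castLE hle a = i := by
    intro C i
    simp [lowEmb]
  -- key construction: any feasible partition of T gives one of T' with the same cost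
  have hSsub : S ⊆ S' := by
    rintro k ⟨P, ⟨hne, hdis, hcov⟩, hsize, hcost⟩
    have hHnotmem : H ∉ P.image (fun B => B.map (lowEmb hle)) := by
      intro hmem
      obtain ⟨C, _, hEq⟩ := Finset.mem_image.mp hmem
      have hx : (⟨n, hlt⟩ : Fin n') ∈ H := (hHmem _).mpr (by simp)
      rw [← hEq] at hx
      obtain ⟨a, _, ha⟩ := (hmapmem C _).mp hx
      have : (a : ℕ) = n := by simpa using congrArg Fin.val ha
      exact absurd a.isLt (by omega)
    refine ⟨insert H (P.image (fun B => B.map (lowEmb hle))), ⟨?_, ?_, ?_⟩, ?_, ?_⟩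
    · intro B hB
      rcases Finset.mem_insert.mp hB with rfl | hB
      · exact hHne
      · obtain ⟨C, hC, rfl⟩ := Finset.mem_image.mp hB
        obtain ⟨a, ha⟩ := hne C hC
        exact ⟨lowEmb hle a, Finset.mem_map_of_mem _ ha⟩
    · intro B hB B' hB' hBB'
      rcases Finset.mem_insert.mp hB with rfl | hB <;>
        rcases Finset.mem_insert.mp hB' with rfl | hB'
      · exact absurd rfl hBB'
      · obtain ⟨C, hC, rfl⟩ := Finset.mem_image.mp hB'
        rw [Finset.disjoint_left]
        intro i hiH hiC
        obtain ⟨a, _, rfl⟩ := (hmapmem C i).mp hiC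
        exact (hHmem _).mp hiH (by simpa using a.isLt)
      · obtain ⟨C, hC, rfl⟩ := Finset.mem_image.mp hB
        rw [Finset.disjoint_right]
        intro i hiH hiC
        obtain ⟨a, _, rfl⟩ := (hmapmem C i).mp hiC
        exact (hHmem _).mp hiH (by simpa using a.isLt)
      · obtain ⟨C, hC, rfl⟩ := Finset.mem_image.mp hB
        obtain ⟨C', hC', rfl⟩ := Finset.mem_image.mp hB'
        have hCC' : C ≠ C' := fun hEq => hBB' (by rw [hEq])
        exact (Finset.disjoint_map _).mpr (hdis C hC C' hC' hCC')
    · intro i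
      by_cases hi : (i : ℕ) < n
      · obtain ⟨B, hB, hiB⟩ := hcov ⟨i, hi⟩
        refine ⟨B.map (lowEmb hle), Finset.mem_insert_of_mem
          (Finset.mem_image_of_mem _ hB), ?_⟩
        exact (hmapmem B i).mpr ⟨⟨i, hi⟩, hiB, Fin.ext rfl⟩
      · exact ⟨H, Finset.mem_insert_self _ _, (hHmem i).mpr hi⟩
    · intro B hB
      rcases Finset.mem_insert.mp hB with rfl | hB
      · exact hHhalf
      · obtain ⟨C, hC, rfl⟩ := Finset.mem_image.mp hB
        rw [Finset.card_map]
        exact hsize C hC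
    · unfold partCost
      rw [Finset.sum_insert hHnotmem,
        suppCost_high T H (fun i hi => (hHmem i).mp hi),
        Finset.sum_image (fun x _ y _ hxy => Finset.map_injective _ hxy), zero_add]
      rw [← hcost]
      unfold partCost
      exact Finset.sum_congr rfl (fun C _ => suppCost_low hle T C)
  -- nonemptiness via the trivial partition
  have hk0 : partCost T {Finset.univ} ∈ S := by
    refine ⟨{Finset.univ}, ⟨?_, ?_, ?_⟩, ?_, rfl⟩
    · intro B hB
      rw [Finset.mem_singleton] at hB; subst hB
      exact ⟨⟨0, by omega⟩, Finset.mem_univ _⟩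
    · intro B hB B' hB' hBB'
      rw [Finset.mem_singleton] at hB hB'; subst hB; subst hB'
      exact absurd rfl hBB'
    · intro i; exact ⟨Finset.univ, Finset.mem_singleton_self _, Finset.mem_univ _⟩
    · intro B hB
      rw [Finset.mem_singleton] at hB; subst hB
      rw [Finset.card_univ, Fintype.card_fin]; omega
  have hub : partCost T {Finset.univ} ≤ n * m := by
    unfold partCost
    rw [Finset.sum_singleton]
    calc suppCost T Finset.univ ≤ Finset.univ.card * Fintype.card (Fin m) := suppCost_le T _
    _ = n * m := by simp
  have hSne : S.Nonempty := ⟨_, hk0⟩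
  have hS'ne : S'.Nonempty := ⟨_, hSsub hk0⟩
  apply le_antisymm
  · exact Nat.sInf_le (hSsub (Nat.sInf_mem hSne))
  · obtain ⟨P', ⟨hne', hdis', hcov'⟩, hsize', hcost'⟩ := Nat.sInf_mem hS'ne
    by_cases hmix : ∃ B ∈ P', (∃ i ∈ B, (i : ℕ) < n) ∧ (∃ i' ∈ B, ¬ (i' : ℕ) < n)
    · obtain ⟨B, hB, ⟨i, hi, hilow⟩, ⟨i', hi', hihigh⟩⟩ := hmix
      have h1 := suppCost_mixed T B i hi hilow i' hi' hihigh
      have h2 : suppCost (extTable T n') B ≤ partCost (extTable T n') P' :=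
        Finset.single_le_sum (fun _ _ => Nat.zero_le _) hB
      have hchain : n * m ≤ n / 2 * (m + n * m) := by
        calc n * m ≤ m + n * m := Nat.le_add_left _ _
        _ ≤ n / 2 * (m + n * m) := Nat.le_mul_of_pos_left _ (by omega)
      have h3 : n / 2 * (m + n * m) ≤ suppCost (extTable T n') B := by
        rw [h1]
        exact Nat.mul_le_mul_right _ (hsize' B hB)
      calc sInf S ≤ partCost T {Finset.univ} := Nat.sInf_le hk0
      _ ≤ sInf S' := le_trans hub (le_trans hchain (le_trans h3
          (le_trans h2 (le_of_eq hcost'))))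
    · push_neg at hmix
      set f : Finset (Fin n') → Finset (Fin n) :=
        fun B => Finset.univ.filter (fun a => Fin.castLE hle a ∈ B) with hfdef
      have hfmem : ∀ (B : Finset (Fin n')) (a : Fin n), a ∈ f B ↔ Fin.castLE hle a ∈ B := by
        intro B a; rw [hfdef]; simp
      have hfmap : ∀ (B : Finset (Fin n')), (∀ i ∈ B, (i : ℕ) < n) →
          (f B).map (lowEmb hle) = B := by
        intro B hBlow
        ext i
        rw [hmapmem]
        constructor
        · rintro ⟨a, ha, rfl⟩; exact (hfmem B a).mp ha
        · intro hi
          refine ⟨⟨(i : ℕ), hBlow i hi⟩, (hfmem B _).mpr ?_, Fin.ext rfl⟩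
          have hEq : Fin.castLE hle ⟨(i : ℕ), hBlow i hi⟩ = i := Fin.ext rfl
          rw [hEq]; exact hi
      set Plow := P'.filter (fun B => ∀ i ∈ B, Fin.val i < n) with hPlowdef
      have hPlowmem : ∀ B, B ∈ Plow ↔ B ∈ P' ∧ ∀ i ∈ B, (i : ℕ) < n := by
        intro B; rw [hPlowdef]; simp
      have hfinj : ∀ B₁ ∈ Plow, ∀ B₂ ∈ Plow, f B₁ = f B₂ → B₁ = B₂ := by
        intro B₁ h₁ B₂ h₂ hEq
        rw [← hfmap B₁ ((hPlowmem B₁).mp h₁).2, ← hfmap B₂ ((hPlowmem B₂).mp h₂).2, hEq]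
      have hcardf : ∀ B : Finset (Fin n'), (∀ i ∈ B, (i : ℕ) < n) → (f B).card = B.card := by
        intro B hBlow
        conv_rhs => rw [← hfmap B hBlow]
        rw [Finset.card_map]
      have hPmem : partCost T (Plow.image f) ∈ S := by
        refine ⟨Plow.image f, ⟨?_, ?_, ?_⟩, ?_, rfl⟩
        · intro C hC
          obtain ⟨B, hBP, rfl⟩ := Finset.mem_image.mp hC
          obtain ⟨hBP', hBlow⟩ := (hPlowmem B).mp hBP
          obtain ⟨x, hx⟩ := hne' B hBP'
          refine ⟨⟨(x : ℕ), hBlow x hx⟩, (hfmem B _).mpr ?_⟩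
          have hEq : Fin.castLE hle ⟨(x : ℕ), hBlow x hx⟩ = x := Fin.ext rfl
          rw [hEq]; exact hx
        · intro C hC C' hC' hCC'
          obtain ⟨B, hBP, rfl⟩ := Finset.mem_image.mp hC
          obtain ⟨B', hBP', rfl⟩ := Finset.mem_image.mp hC'
          have hBB' : B ≠ B' := fun hEq => hCC' (by rw [hEq])
          have hd := hdis' B ((hPlowmem B).mp hBP).1 B' ((hPlowmem B').mp hBP').1 hBB'
          rw [Finset.disjoint_left] at hd ⊢
          intro a haB haB'
          exact hd ((hfmem B a).mp haB) ((hfmem B' a).mp haB')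
        · intro a
          obtain ⟨B, hBP', haB⟩ := hcov' (Fin.castLE hle a)
          have hBlow : ∀ i ∈ B, (i : ℕ) < n :=
            hmix B hBP' ⟨Fin.castLE hle a, haB, by simpa using a.isLt⟩
          exact ⟨f B, Finset.mem_image_of_mem _ ((hPlowmem B).mpr ⟨hBP', hBlow⟩),
            (hfmem B a).mpr haB⟩
        · intro C hC
          obtain ⟨B, hBP, rfl⟩ := Finset.mem_image.mp hC
          obtain ⟨hBP', hBlow⟩ := (hPlowmem B).mp hBP
          rw [hcardf B hBlow]
          exact hsize' B hBP'
      have hcostle : partCost T (Plow.image f) ≤ sInf S' := by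
        unfold partCost
        rw [Finset.sum_image hfinj]
        calc ∑ B ∈ Plow, suppCost T (f B)
            = ∑ B ∈ Plow, suppCost (extTable T n') B := by
              apply Finset.sum_congr rfl
              intro B hBP
              rw [← suppCost_low hle T (f B), hfmap B ((hPlowmem B).mp hBP).2]
        _ ≤ ∑ B ∈ P', suppCost (extTable T n') B := by
              apply Finset.sum_le_sum_of_subset
              rw [hPlowdef]
              exact Finset.filter_subset _ _
        _ = sInf S' := hcost'
      exact le_trans (Nat.sInf_le hPmem) hcostle
end

section
/- Let G be a simple graph on n vertices and let k ≥ 1 with 2k < n. Let G' be obtained from G by adding n − 2k new vertices, each adjacent to every other vertex of G' (both old and new), so that G' has exactly 2(n − k) vertices. Then G contains a clique with exactly k vertices if and only if G' contains a clique with exactly n − k vertices (i.e., half the vertices of G'). -/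
/-- The graph obtained from `G` by adding a set `β` of new universal vertices:
each new vertex is adjacent to every other vertex (old or new). -/
def addUniversal {α β : Type*} (G : SimpleGraph α) : SimpleGraph (α ⊕ β) where
  Adj a b := a ≠ b ∧ ∀ u v, a = Sum.inl u → b = Sum.inl v → G.Adj u v
  symm := by
    constructor
    rintro a b ⟨hab, h⟩
    refine ⟨hab.symm, ?_⟩
    rintro u v rfl rfl
    exact (h v u rfl rfl).symm
  loopless := by
    constructor
    rintro a ⟨h, -⟩
    exact h rfl

theorem stmt8 (n k : ℕ) (hk : 1 ≤ k) (h2k : 2 * k < n) (G : SimpleGraph (Fin n)) :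
    (∃ s : Finset (Fin n), G.IsNClique k s) ↔
    (∃ s : Finset (Fin n ⊕ Fin (n - 2 * k)),
      (addUniversal (β := Fin (n - 2 * k)) G).IsNClique (n - k) s) := by
  constructor
  · rintro ⟨s, hs⟩
    refine ⟨s.disjSum Finset.univ, ?_, ?_⟩
    · intro a ha b hb hab
      refine ⟨hab, ?_⟩
      rintro u v rfl rfl
      simp only [Finset.mem_coe, Finset.inl_mem_disjSum] at ha hb
      exact hs.1 ha hb (fun h => hab (by rw [h]))
    · rw [Finset.card_disjSum, hs.2, Finset.card_univ, Fintype.card_fin]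
      omega
  · rintro ⟨s, hs⟩
    have hcard : s.toLeft.card + s.toRight.card = n - k := by
      rw [Finset.card_toLeft_add_card_toRight, hs.2]
    have hR : s.toRight.card ≤ n - 2 * k := by
      simpa using Finset.card_le_univ s.toRight
    have hL : k ≤ s.toLeft.card := by omega
    obtain ⟨t, hts, htcard⟩ := Finset.exists_subset_card_eq hL
    refine ⟨t, ?_, htcard⟩
    intro u hu v hv huv
    have hu' : Sum.inl u ∈ s := Finset.mem_toLeft.1 (hts hu)
    have hv' : Sum.inl v ∈ s := Finset.mem_toLeft.1 (hts hv)
    have := hs.1 hu' hv' (fun h => huv (Sum.inl_injective h))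
    exact this.2 u v rfl rfl
end

section
/- Let n ≥ 4 be even, let c be a rational number with 1/3 < c < 1/2 such that n' := n/(2c) is an integer with n' ≥ n + 2, and let G be a simple graph on vertex set Fin n with edge set E(G) and m := |E(G)|. Define the table T : Fin n' → E(G) → ℕ by: for rows i < n, T(i)(e) = i + 1 if vertex i is an endpoint of e and T(i)(e) = 0 otherwise; for rows n ≤ i < n', T(i)(e) = i + 1 for all e. Then G contains a clique with exactly n/2 vertices if and only if the rows of T admit a partition all of whose blocks have size at least n/2 (= c·n') and whose cost is at most n'·m − (n/2)·C(n/2, 2), where C(n/2, 2) = (n/2)·(n/2 − 1)/2. -/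
open Finset

attribute [local instance] Classical.propDecidable

/- ### Auxiliary lemmas -/

lemma cardSubtypeFilter {α : Type*} [Fintype α] (t : Finset α) (q : α → Prop)
    [DecidablePred q] [DecidablePred (fun j : t => q ↑j)] :
    (univ.filter (fun j : t => q ↑j)).card = (t.filter q).card := by
  classical
  refine Finset.card_bij (fun j _ => (j : α)) ?_ ?_ ?_
  · intro j hj; simp only [mem_filter, mem_univ, true_and] at hj
    exact Finset.mem_filter.2 ⟨j.2, hj⟩
  · intro a ha b hb h; exact Subtype.ext h
  · intro b hb; rw [mem_filter] at hb
    exact ⟨⟨b, hb.1⟩, by simpa using hb.2, rfl⟩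

lemma doubleCount {n : ℕ} (G : SimpleGraph (Fin n)) [DecidableRel G.Adj] (s : Finset (Fin n)) :
    (s.offDiag.filter (fun p => G.Adj p.1 p.2)).card =
      2 * (G.edgeFinset.filter (fun e => ∀ v ∈ e, v ∈ s)).card := by
  classical
  have hmap : ∀ p ∈ s.offDiag.filter (fun p => G.Adj p.1 p.2),
      s(p.1, p.2) ∈ G.edgeFinset.filter (fun e => ∀ v ∈ e, v ∈ s) := by
    intro p hp
    rw [mem_filter, mem_offDiag] at hp
    refine Finset.mem_filter.2 ⟨SimpleGraph.mem_edgeFinset.2 hp.2, ?_⟩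
    intro v hv
    rcases Sym2.mem_iff.1 hv with h | h
    · exact h ▸ hp.1.1
    · exact h ▸ hp.1.2.1
  rw [Finset.card_eq_sum_card_fiberwise hmap]
  rw [Finset.sum_congr rfl (fun j hj => ?_), Finset.sum_const, smul_eq_mul, mul_comm]
  induction j using Sym2.ind with
  | _ a b =>
    rw [mem_filter] at hj
    have hadj : G.Adj a b := SimpleGraph.mem_edgeFinset.1 hj.1
    have hab : a ≠ b := hadj.ne
    have ha : a ∈ s := hj.2 a (Sym2.mem_mk_left a b)
    have hb : b ∈ s := hj.2 b (Sym2.mem_mk_right a b)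
    have h2 : (s.offDiag.filter (fun p => G.Adj p.1 p.2)).filter
        (fun p => s(p.1, p.2) = s(a, b)) = {(a, b), (b, a)} := by
      ext p
      simp only [mem_filter, mem_offDiag, mem_insert, mem_singleton, Sym2.mk_eq_mk_iff (q := (a, b))]
      constructor
      · rintro ⟨-, h | h⟩
        · exact Or.inl h
        · right; rw [Prod.ext_iff] at h ⊢; exact ⟨h.1, h.2⟩
      · rintro (rfl | rfl)
        · exact ⟨⟨⟨ha, hb, hab⟩, hadj⟩, Or.inl rfl⟩
        · exact ⟨⟨⟨hb, ha, hab.symm⟩, hadj.symm⟩, Or.inr rfl⟩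
    rw [h2, Finset.card_insert_of_notMem (by simp [Prod.ext_iff]; tauto), Finset.card_singleton]

lemma agree_iff_zero {N : ℕ} {ι α : Type*} [Fintype ι] (T : Fin N → ι → α) (z : α)
    (hinj : ∀ i i' : Fin N, ∀ j : ι, T i j ≠ z → T i j = T i' j → i = i')
    (B : Finset (Fin N)) (hB : 2 ≤ B.card) (j : ι) :
    (∀ i ∈ B, ∀ i' ∈ B, T i j = T i' j) ↔ ∀ i ∈ B, T i j = z := by
  constructor
  · intro h i hi
    by_contra hz
    obtain ⟨i', hi', hne⟩ := Finset.exists_mem_ne (lt_of_lt_of_le one_lt_two hB) i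
    exact hne (hinj i i' j hz (h i hi i' hi')).symm
  · intro h i hi i' hi'; rw [h i hi, h i' hi']

lemma suppCost_eq_s9 {N : ℕ} {ι α : Type*} [Fintype ι] (T : Fin N → ι → α) (z : α)
    (hinj : ∀ i i' : Fin N, ∀ j : ι, T i j ≠ z → T i j = T i' j → i = i')
    (B : Finset (Fin N)) (hB : 2 ≤ B.card)
    [DecidablePred (fun j : ι => ∀ i ∈ B, T i j = z)] :
    suppCost T B = B.card *
      (Fintype.card ι - (univ.filter (fun j : ι => ∀ i ∈ B, T i j = z)).card) := by
  unfold suppCost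
  congr 1
  have h1 : (univ.filter (fun j : ι => ¬ ∀ i ∈ B, ∀ i' ∈ B, T i j = T i' j))
      = (univ.filter (fun j : ι => ¬ ∀ i ∈ B, T i j = z)) :=
    Finset.filter_congr (fun j _ => not_congr (agree_iff_zero T z hinj B hB j))
  rw [h1]
  have h2 := Finset.card_filter_add_card_filter_not
    (s := (univ : Finset ι)) (p := fun j : ι => ∀ i ∈ B, T i j = z)
  rw [Finset.card_univ] at h2
  omega

lemma partition_sum_card {N : ℕ} {P : Finset (Finset (Fin N))} (h : IsRowPartition P) :
    ∑ B ∈ P, B.card = N := by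
  classical
  have hb : P.biUnion id = univ := by
    apply Finset.eq_univ_of_forall
    intro i
    obtain ⟨B, hB, hiB⟩ := h.2.2 i
    exact Finset.mem_biUnion.2 ⟨B, hB, hiB⟩
  calc ∑ B ∈ P, B.card = (P.biUnion id).card := (Finset.card_biUnion h.2.1).symm
    _ = N := by rw [hb, card_univ, Fintype.card_fin]

lemma int_cube_ineq (K t : ℤ) (hK : 2 ≤ K) (ht0 : 0 ≤ t) (ht : t + 1 ≤ K)
    (h : K * (K * K - K) ≤ (2 * K - t) * (t * t - t)) : False := by
  nlinarith [mul_nonneg (mul_nonneg (sub_nonneg.2 (by linarith : t ≤ K)) ht0)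
      (by linarith : (0:ℤ) ≤ K + t),
    mul_nonneg (mul_nonneg (by linarith : (0:ℤ) ≤ K - t) ht0) ht0,
    mul_pos (by linarith : (0:ℤ) < K - t) (by linarith : (0:ℤ) < K - 1)]

lemma nat_mul_sub_self (k : ℕ) : k * k - k = k * (k - 1) := by
  cases k with
  | zero => simp
  | succ p => rw [Nat.succ_sub_one, Nat.mul_succ]; omega

theorem stmt9 (n n' : ℕ) (hn : 4 ≤ n) (hev : Even n)
    (c : ℚ) (hc1 : 1 / 3 < c) (hc2 : c < 1 / 2)
    (hn' : (n' : ℚ) = (n : ℚ) / (2 * c)) (hn'2 : n + 2 ≤ n')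
    (G : SimpleGraph (Fin n)) [DecidableRel G.Adj] :
    (∃ s : Finset (Fin n), G.IsNClique (n / 2) s) ↔
    (∃ P : Finset (Finset (Fin n')), IsRowPartition P ∧
      (∀ B ∈ P, n / 2 ≤ B.card) ∧
      (partCost
          (fun (i : Fin n') (e : G.edgeFinset) =>
            if h : (i : ℕ) < n then
              (if (⟨(i : ℕ), h⟩ : Fin n) ∈ (e : Sym2 (Fin n)) then (i : ℕ) + 1 else 0)
            else (i : ℕ) + 1) P : ℤ)
        ≤ (n' : ℤ) * (G.edgeFinset.card : ℤ)
            - ((n / 2 : ℕ) : ℤ) * ((((n / 2) * (n / 2 - 1) / 2 : ℕ)) : ℤ)) := by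
  classical
  set k := n / 2 with hkdef
  obtain ⟨r, hr⟩ := hev
  have hnk : n = 2 * k := by omega
  have hk2 : 2 ≤ k := by omega
  have hle : n ≤ n' := by omega
  set T : Fin n' → G.edgeFinset → ℕ :=
    (fun (i : Fin n') (e : G.edgeFinset) =>
      if h : (i : ℕ) < n then
        (if (⟨(i : ℕ), h⟩ : Fin n) ∈ (e : Sym2 (Fin n)) then (i : ℕ) + 1 else 0)
      else (i : ℕ) + 1) with hT
  clear_value T
  set m := G.edgeFinset.card with hm
  set C := k * (k - 1) / 2 with hC
  have hCk : 2 * C = k * (k - 1) := by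
    have : 2 ∣ k * (k - 1) := by
      rcases Nat.even_or_odd k with h | h
      · exact Dvd.dvd.mul_right h.two_dvd _
      · exact Dvd.dvd.mul_left (Nat.Odd.sub_odd h odd_one).two_dvd _
    omega
  have hkk : k * k - k = k * (k - 1) := nat_mul_sub_self k
  -- basic facts about T
  have hTzero : ∀ (i : Fin n') (j : G.edgeFinset),
      T i j = 0 ↔ ∃ h : (i : ℕ) < n, (⟨(i : ℕ), h⟩ : Fin n) ∉ (j : Sym2 (Fin n)) := by
    intro i j
    rw [hT]
    by_cases h : (i : ℕ) < n
    · simp only [dif_pos h]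
      by_cases hmem : (⟨(i : ℕ), h⟩ : Fin n) ∈ (j : Sym2 (Fin n))
      · simp [hmem]
      · simp [hmem, h]
    · simp [dif_neg h, h]
  have hinj : ∀ i i' : Fin n', ∀ j : G.edgeFinset, T i j ≠ 0 → T i j = T i' j → i = i' := by
    intro i i' j hz heq
    have hv : T i j = (i : ℕ) + 1 := by
      rw [hT] at hz ⊢
      by_cases h : (i : ℕ) < n
      · simp only [dif_pos h] at hz ⊢
        by_cases hmem : (⟨(i : ℕ), h⟩ : Fin n) ∈ (j : Sym2 (Fin n))
        · simp [hmem]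
        · simp [hmem] at hz
      · simp [dif_neg h]
    have hv' : T i' j = 0 ∨ T i' j = (i' : ℕ) + 1 := by
      rw [hT]
      by_cases h : (i' : ℕ) < n
      · simp only [dif_pos h]
        by_cases hmem : (⟨(i' : ℕ), h⟩ : Fin n) ∈ (j : Sym2 (Fin n))
        <;> simp [hmem]
      · simp [dif_neg h]
    rcases hv' with h | h
    · rw [hv, h] at heq; omega
    · rw [hv, h] at heq
      exact Fin.ext (by omega)
  have hmcard : Fintype.card G.edgeFinset = m := Fintype.card_coe _
  -- zero-set characterization for blocks of real rows
  have hzeroChar : ∀ (B : Finset (Fin n')) (hreal : ∀ i ∈ B, (i : ℕ) < n)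
      (j : G.edgeFinset),
      (∀ i ∈ B, T i j = 0) ↔
        (∀ v ∈ (j : Sym2 (Fin n)),
          v ∈ univ.filter (fun v : Fin n => Fin.castLE hle v ∉ B)) := by
    intro B hreal j
    constructor
    · intro h v hv
      simp only [mem_filter, mem_univ, true_and]
      intro hvB
      have h0 := h _ hvB
      rw [hTzero] at h0
      obtain ⟨hlt, hnot⟩ := h0
      apply hnot
      have he : (⟨((Fin.castLE hle v : Fin n') : ℕ), hlt⟩ : Fin n) = v := Fin.ext rfl
      rw [he]
      exact hv
    · intro h i hi
      have hlt : (i : ℕ) < n := hreal i hi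
      rw [hTzero]
      refine ⟨hlt, fun hmem => ?_⟩
      have hv := h _ hmem
      simp only [mem_filter, mem_univ, true_and] at hv
      apply hv
      have he : Fin.castLE hle (⟨(i : ℕ), hlt⟩ : Fin n) = i := Fin.ext rfl
      rw [he]; exact hi
  -- card relation between B (real rows) and its complement in Fin n
  have hcardCompl : ∀ (B : Finset (Fin n')) (hreal : ∀ i ∈ B, (i : ℕ) < n),
      B.card + (univ.filter (fun v : Fin n => Fin.castLE hle v ∉ B)).card = n := by
    intro B hreal
    have h1 : B.card = (univ.filter (fun v : Fin n => Fin.castLE hle v ∈ B)).card := by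
      refine Finset.card_bij (fun a ha => (⟨(a : ℕ), hreal a ha⟩ : Fin n)) ?_ ?_ ?_
      · intro a ha
        simp only [mem_filter, mem_univ, true_and]
        have he : Fin.castLE hle (⟨(a : ℕ), hreal a ha⟩ : Fin n) = a := Fin.ext rfl
        rw [he]; exact ha
      · intro a1 ha1 a2 ha2 h
        simp only [Fin.mk.injEq] at h
        exact Fin.ext h
      · intro v hv
        simp only [mem_filter, mem_univ, true_and] at hv
        exact ⟨Fin.castLE hle v, hv, Fin.ext rfl⟩
    have h2 := Finset.card_filter_add_card_filter_not
      (s := (univ : Finset (Fin n))) (p := fun v : Fin n => Fin.castLE hle v ∈ B)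
    rw [card_univ, Fintype.card_fin] at h2
    omega
  constructor
  · -- Forward direction
    rintro ⟨s, hs⟩
    have hscard : s.card = k := hs.2
    set p : Fin n' → Prop :=
      fun i => ∃ h : (i : ℕ) < n, (⟨(i : ℕ), h⟩ : Fin n) ∉ s with hp
    set A := (univ : Finset (Fin n')).filter p with hA
    set Ac := (univ : Finset (Fin n')).filter (fun a => ¬ p a) with hAc
    clear_value A Ac
    have hAreal : ∀ i ∈ A, (i : ℕ) < n := by
      intro i hi
      simp only [hA, mem_filter] at hi
      obtain ⟨-, h, -⟩ := hi
      exact h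
    -- the complement set of A (inside Fin n) is s
    have hcompl : (univ.filter (fun v : Fin n => Fin.castLE hle v ∉ A)) = s := by
      ext v
      simp only [mem_filter, mem_univ, true_and, hA, hp]
      constructor
      · intro h
        by_contra hvs
        exact h ⟨v.isLt, by simpa using hvs⟩
      · intro hvs ⟨hlt, hnot⟩
        exact hnot (by simpa using hvs)
    have hAcard : A.card = k := by
      have := hcardCompl A hAreal
      rw [hcompl, hscard] at this
      omega
    have hsplit : A.card + Ac.card = n' := by
      have h2 := Finset.card_filter_add_card_filter_not
        (s := (univ : Finset (Fin n'))) (p := p)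
      rw [card_univ, Fintype.card_fin, ← hA, ← hAc] at h2
      exact h2
    have hAcCard : Ac.card = n' - k := by omega
    -- the dummy row
    have hdum : (⟨n, by omega⟩ : Fin n') ∈ Ac := by
      simp only [hAc, hp, mem_filter, mem_univ, true_and]
      rintro ⟨hlt, -⟩
      simp at hlt
    have hdumA : (⟨n, by omega⟩ : Fin n') ∉ A := by
      simp only [hA, hp, mem_filter, mem_univ, true_and]
      rintro ⟨hlt, -⟩
      simp at hlt
    have hne : A ≠ Ac := by
      intro h
      have hcc := congrArg Finset.card h
      rw [hAcard, hAcCard] at hcc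
      omega
    have hdisj : Disjoint A Ac := by
      rw [hA, hAc]
      exact Finset.disjoint_filter_filter_not univ univ p
    have hmem2 : ∀ B : Finset (Fin n'), B ∈ ({A, Ac} : Finset (Finset (Fin n'))) →
        B = A ∨ B = Ac := by
      intro B hB
      simpa using hB
    refine ⟨{A, Ac}, ⟨?_, ?_, ?_⟩, ?_, ?_⟩
    · intro B hB
      rcases hmem2 B hB with rfl | rfl
      · exact Finset.card_pos.1 (by omega)
      · exact Finset.card_pos.1 (by omega)
    · intro B hB B' hB' hBB'
      rcases hmem2 B hB with rfl | rfl <;> rcases hmem2 B' hB' with rfl | rfl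
      · exact absurd rfl hBB'
      · exact hdisj
      · exact hdisj.symm
      · exact absurd rfl hBB'
    · intro i
      by_cases h : p i
      · exact ⟨A, Finset.mem_insert_self _ _, by simp only [hA, mem_filter]; exact ⟨mem_univ _, h⟩⟩
      · exact ⟨Ac, Finset.mem_insert.2 (Or.inr (Finset.mem_singleton_self _)),
          by simp only [hAc, mem_filter]; exact ⟨mem_univ _, h⟩⟩
    · intro B hB
      rcases hmem2 B hB with rfl | rfl
      · omega
      · omega
    · -- cost estimate
      have hcost : partCost T {A, Ac} = suppCost T A + suppCost T Ac := by
        rw [partCost, Finset.sum_insert (by simpa using hne), Finset.sum_singleton]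
      -- suppCost of Ac
      have hAcCost : suppCost T Ac = Ac.card * m := by
        rw [suppCost_eq_s9 T 0 hinj Ac (by omega), hmcard]
        have hempty : (univ.filter (fun j : G.edgeFinset => ∀ i ∈ Ac, T i j = 0)) = ∅ := by
          apply Finset.eq_empty_of_forall_notMem
          intro j hj
          rw [mem_filter] at hj
          have h0 := hj.2 _ hdum
          rw [hTzero] at h0
          obtain ⟨hlt, -⟩ := h0
          simp at hlt
        rw [hempty]
        simp
      -- facts about edges inside the clique
      have hMs : 2 * (G.edgeFinset.filter (fun e => ∀ v ∈ e, v ∈ s)).card = k * k - k := by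
        have h2 := doubleCount G s
        have h3 : s.offDiag.filter (fun q => G.Adj q.1 q.2) = s.offDiag := by
          apply Finset.filter_true_of_mem
          intro q hq
          rw [mem_offDiag] at hq
          exact hs.1 (Finset.mem_coe.2 hq.1) (Finset.mem_coe.2 hq.2.1) hq.2.2
        rw [h3, Finset.offDiag_card, hscard] at h2
        omega
      -- suppCost of A
      have hACost : suppCost T A = k * (m - C) := by
        rw [suppCost_eq_s9 T 0 hinj A (by omega), hmcard, hAcard]
        congr 2
        have h1 : (univ.filter (fun j : G.edgeFinset => ∀ i ∈ A, T i j = 0))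
            = (univ.filter (fun j : G.edgeFinset =>
                ∀ v ∈ (j : Sym2 (Fin n)), v ∈ s)) := by
          apply Finset.filter_congr
          intro j _
          rw [hzeroChar A hAreal j, hcompl]
        rw [h1, cardSubtypeFilter G.edgeFinset (fun e => ∀ v ∈ e, v ∈ s)]
        omega
      have hCm : C ≤ m := by
        have h4 : (G.edgeFinset.filter (fun e => ∀ v ∈ e, v ∈ s)).card ≤ m :=
          Finset.card_filter_le _ _
        omega
      rw [hcost, hACost, hAcCost, hAcCard]
      push_cast [Nat.cast_sub hCm, Nat.cast_sub (by omega : k ≤ n')]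
      linarith
  · -- Reverse direction
    rintro ⟨P, hpart, hsize, hcost⟩
    have hn'3k : n' < 3 * k := by
      have hc0 : (0 : ℚ) < c := by linarith
      have hmul : (n' : ℚ) * (2 * c) = n := by
        rw [hn']
        field_simp
      have hn'0 : (0 : ℚ) < (n' : ℚ) := by
        have : (0 : ℕ) < n' := by omega
        exact_mod_cast this
      have h2 : 2 * (n' : ℚ) < 3 * n := by nlinarith
      have h3 : 2 * n' < 3 * n := by exact_mod_cast h2
      omega
    -- per-block cost
    have hb2 : ∀ B ∈ P, 2 ≤ B.card := fun B hB => le_trans hk2 (hsize B hB)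
    set zc : Finset (Fin n') → ℕ :=
      fun B => (univ.filter (fun j : G.edgeFinset => ∀ i ∈ B, T i j = 0)).card with hzc
    clear_value zc
    have hzcm : ∀ B, zc B ≤ m := by
      intro B
      rw [hzc]
      exact le_trans (Finset.card_filter_le _ _)
        (le_of_eq (by rw [card_univ, hmcard]))
    have hblock : ∀ B ∈ P, suppCost T B = B.card * (m - zc B) := by
      intro B hB
      rw [suppCost_eq_s9 T 0 hinj B (hb2 B hB), hmcard, hzc]
    -- total cost identity
    have hsum : ∑ B ∈ P, B.card = n' := partition_sum_card hpart
    have htotal : (partCost T P : ℤ) = (n' : ℤ) * m - ∑ B ∈ P, (B.card : ℤ) * zc B := by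
      have h4 : (partCost T P : ℤ)
          = ∑ B ∈ P, ((B.card : ℤ) * m - (B.card : ℤ) * zc B) := by
        rw [partCost]
        push_cast
        refine Finset.sum_congr rfl (fun B hB => ?_)
        rw [hblock B hB]
        push_cast [Nat.cast_sub (hzcm B)]
        ring
      rw [h4, Finset.sum_sub_distrib, ← Finset.sum_mul]
      have h5 : (∑ B ∈ P, (B.card : ℤ)) = (n' : ℤ) := by exact_mod_cast congrArg Nat.cast hsum
      rw [h5]
    have hS : (k : ℤ) * C ≤ ∑ B ∈ P, (B.card : ℤ) * zc B := by
      rw [htotal] at hcost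
      linarith
    -- at most one block has positive zc
    have hrealB : ∀ B ∈ P, 0 < zc B → ∀ i ∈ B, (i : ℕ) < n := by
      intro B hB hpos i hi
      rw [hzc] at hpos
      obtain ⟨j, hj⟩ := Finset.card_pos.1 hpos
      rw [mem_filter] at hj
      have h6 := hj.2 i hi
      rw [hTzero] at h6
      exact h6.1
    have huniq : ∀ B1 ∈ P, ∀ B2 ∈ P, B1 ≠ B2 → 0 < zc B1 → zc B2 = 0 := by
      intro B1 hB1 B2 hB2 hne12 hpos1
      by_contra hpos2
      have hpos2 : 0 < zc B2 := Nat.pos_of_ne_zero hpos2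
      set realSet := (univ : Finset (Fin n')).filter (fun i : Fin n' => (i : ℕ) < n) with hrs
      clear_value realSet
      have hrscard : realSet.card = n := by
        have h1 : realSet.card = (univ : Finset (Fin n)).card := by
          refine Finset.card_bij (fun (a : Fin n') ha => (⟨(a : ℕ), by
            rw [hrs, mem_filter] at ha; exact ha.2⟩ : Fin n)) ?_ ?_ ?_
          · intro a ha; exact mem_univ _
          · intro a1 ha1 a2 ha2 h
            simp only [Fin.mk.injEq] at h
            exact Fin.ext h
          · intro v _
            refine ⟨Fin.castLE hle v, ?_, Fin.ext rfl⟩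
            rw [hrs, mem_filter]
            exact ⟨mem_univ _, v.isLt⟩
        rw [h1, card_univ, Fintype.card_fin]
      have hsub1 : B1 ⊆ realSet := by
        intro i hi
        rw [hrs, mem_filter]
        exact ⟨mem_univ _, hrealB B1 hB1 hpos1 i hi⟩
      have hsub2 : B2 ⊆ realSet := by
        intro i hi
        rw [hrs, mem_filter]
        exact ⟨mem_univ _, hrealB B2 hB2 hpos2 i hi⟩
      have hdisj12 : Disjoint B1 B2 := hpart.2.1 B1 hB1 B2 hB2 hne12
      have hun : B1 ∪ B2 ⊆ realSet := Finset.union_subset hsub1 hsub2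
      have hcard12 : B1.card + B2.card ≤ n := by
        rw [← Finset.card_union_of_disjoint hdisj12]
        exact le_trans (Finset.card_le_card hun) (le_of_eq hrscard)
      have hc1' : B1.card = k := by have := hsize B1 hB1; have := hsize B2 hB2; omega
      have hc2' : B2.card = k := by have := hsize B1 hB1; have := hsize B2 hB2; omega
      have hueq : B1 ∪ B2 = realSet := by
        apply Finset.eq_of_subset_of_card_le hun
        rw [hrscard, Finset.card_union_of_disjoint hdisj12]
        omega
      -- a block containing the dummy row
      obtain ⟨B3, hB3, hd3⟩ := hpart.2.2 (⟨n, by omega⟩ : Fin n')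
      have hd3n : ¬ ((⟨n, by omega⟩ : Fin n') : ℕ) < n := by simp
      have hne31 : B3 ≠ B1 := fun h => hd3n (hrealB B1 hB1 hpos1 _ (h ▸ hd3))
      have hne32 : B3 ≠ B2 := fun h => hd3n (hrealB B2 hB2 hpos2 _ (h ▸ hd3))
      have hdisj3 : Disjoint B3 realSet := by
        rw [← hueq, Finset.disjoint_union_right]
        exact ⟨hpart.2.1 B3 hB3 B1 hB1 hne31, hpart.2.1 B3 hB3 B2 hB2 hne32⟩
      have hcard3 : B3.card ≤ n' - n := by
        have hsub : B3 ⊆ realSetᶜ := by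
          intro i hi
          rw [Finset.mem_compl]
          exact Finset.disjoint_left.1 hdisj3 hi
        calc B3.card ≤ realSetᶜ.card := Finset.card_le_card hsub
          _ = n' - n := by rw [Finset.card_compl, hrscard, Fintype.card_fin]
      have := hsize B3 hB3
      omega
    -- extract the unique positive block
    have hCpos : 0 < k * C := by
      have h7 : 2 * 1 ≤ k * (k - 1) := Nat.mul_le_mul hk2 (by omega)
      have h8 : 1 ≤ C := by omega
      exact Nat.mul_pos (by omega) (by omega)
    have hex : ∃ B0 ∈ P, 0 < zc B0 := by
      by_contra h
      push_neg at h
      have hall : ∀ B ∈ P, (B.card : ℤ) * zc B = 0 := by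
        intro B hB
        have h10 := h B hB
        have h11 : zc B = 0 := by omega
        rw [h11]; simp
      rw [Finset.sum_congr rfl hall] at hS
      simp at hS
      have h12 : (0 : ℤ) < (k : ℤ) * C := by exact_mod_cast hCpos
      linarith
    obtain ⟨B0, hB0, hpos0⟩ := hex
    have hSeq : ∑ B ∈ P, (B.card : ℤ) * zc B = (B0.card : ℤ) * zc B0 := by
      apply Finset.sum_eq_single_of_mem B0 hB0
      intro b hb hbne
      rw [huniq B0 hB0 b hb (Ne.symm hbne) hpos0]
      simp
    have hkey : (k : ℤ) * C ≤ (B0.card : ℤ) * zc B0 := hSeq ▸ hS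
    have hkeyN : k * C ≤ B0.card * zc B0 := by exact_mod_cast hkey
    have hreal0 : ∀ i ∈ B0, (i : ℕ) < n := hrealB B0 hB0 hpos0
    set s := univ.filter (fun v : Fin n => Fin.castLE hle v ∉ B0) with hsdef
    clear_value s
    set t := s.card with htdef
    clear_value t
    have hbt : B0.card + t = n := by
      rw [htdef, hsdef]
      exact hcardCompl B0 hreal0
    have hbk : k ≤ B0.card := hsize B0 hB0
    have htk : t ≤ k := by omega
    -- zc B0 is the number of edges inside s
    set M := (G.edgeFinset.filter (fun e => ∀ v ∈ e, v ∈ s)).card with hM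
    clear_value M
    have hzcM : zc B0 = M := by
      simp only [hzc]
      rw [Finset.filter_congr (fun j _ => hzeroChar B0 hreal0 j)]
      rw [← hsdef, hM]
      exact cardSubtypeFilter G.edgeFinset (fun e => ∀ v ∈ e, v ∈ s)
    have hdc : (s.offDiag.filter (fun q => G.Adj q.1 q.2)).card = 2 * M := by
      rw [hM]
      exact doubleCount G s
    have h2M : 2 * M ≤ t * t - t := by
      have h13 : (s.offDiag.filter (fun q => G.Adj q.1 q.2)).card ≤ s.offDiag.card :=
        Finset.card_filter_le _ _
      rw [hdc, Finset.offDiag_card, ← htdef] at h13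
      exact h13
    rw [hzcM] at hkeyN
    -- the chain of inequalities
    have hchain : k * (k * k - k) ≤ B0.card * (t * t - t) := by
      calc k * (k * k - k) = k * (2 * C) := by rw [hCk, hkk]
        _ = 2 * (k * C) := by ring
        _ ≤ 2 * (B0.card * M) := Nat.mul_le_mul_left 2 hkeyN
        _ = B0.card * (2 * M) := by ring
        _ ≤ B0.card * (t * t - t) := Nat.mul_le_mul_left _ h2M
    have htt : t ≤ t * t := by
      rcases Nat.eq_zero_or_pos t with h | h
      · simp [h]
      · exact Nat.le_mul_of_pos_left t h
    have hkkle : k ≤ k * k := Nat.le_mul_of_pos_left k (by omega)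
    have htk2 : t = k := by
      by_contra hnet
      have htlt : t + 1 ≤ k := by omega
      have hcast : (k : ℤ) * ((k : ℤ) * k - k) ≤ (2 * (k : ℤ) - t) * ((t : ℤ) * t - t) := by
        have hb0 : (B0.card : ℤ) = 2 * (k : ℤ) - t := by
          have : B0.card = 2 * k - t := by omega
          rw [this]
          push_cast [Nat.cast_sub (by omega : t ≤ 2 * k)]
          ring
        calc (k : ℤ) * ((k : ℤ) * k - k)
            = ((k * (k * k - k) : ℕ) : ℤ) := by
              push_cast [Nat.cast_sub hkkle]; ring
          _ ≤ ((B0.card * (t * t - t) : ℕ) : ℤ) := by exact_mod_cast hchain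
          _ = (2 * (k : ℤ) - t) * ((t : ℤ) * t - t) := by
              push_cast [Nat.cast_sub htt]
              rw [← hb0]
      exact int_cube_ineq k t (by exact_mod_cast hk2) (by positivity) (by exact_mod_cast htlt)
        hcast
    have hb0k : B0.card = k := by omega
    -- M = C and all pairs in s are adjacent
    have hMC : C ≤ M := by
      rw [hb0k] at hkeyN
      exact Nat.le_of_mul_le_mul_left hkeyN (by omega)
    have hMC2 : 2 * M ≤ 2 * C := by
      rw [htk2] at h2M
      omega
    have hMeq : M = C := by omega
    have hfull : s.offDiag.filter (fun q => G.Adj q.1 q.2) = s.offDiag := by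
      apply Finset.eq_of_subset_of_card_le (Finset.filter_subset _ _)
      rw [hdc, Finset.offDiag_card, ← htdef, htk2, hMeq, hCk, ← hkk]
    refine ⟨s, ⟨?_, ?_⟩⟩
    · intro a ha b hb hab
      have hmem : (a, b) ∈ s.offDiag :=
        Finset.mem_offDiag.2 ⟨Finset.mem_coe.1 ha, Finset.mem_coe.1 hb, hab⟩
      rw [← hfull, mem_filter] at hmem
      exact hmem.2
    · rw [← htdef, htk2]
end

section
/- Let n ≥ 1 and m ≥ 1, let χ : Fin (3n) → Fin 3 be a map each of whose three fibers has exactly n elements, and let e : Fin m → Finset (Fin (3n)) be an injective family such that each e(j) has exactly 3 elements, one in each fiber of χ. Define the table T : Fin (3n) → Fin m → ℕ by T(i)(j) = 0 if i ∈ e(j) and T(i)(j) = i + 1 otherwise, with sensitive-attribute map SA = χ. Let t be a real number with 0 ≤ t < 1/3. Then the following are equivalent: (1) there exists M ⊆ Fin m with |M| = n such that the union of e(j) over j ∈ M equals all of Fin (3n); (2) there exists a partition P of the rows such that every block B of P satisfies EMD(P(B), P(Fin (3n))) ≤ t with respect to the equal-distance metric on Fin 3 and cost(P) ≤ 3n·(m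 − 1). -/
open Finset

attribute [local instance] Classical.propDecidable

lemma EMD_self_nonpos {s : ℕ} (X : Fin s → ℝ) (hX : ∀ i, 0 ≤ X i) :
    EMD (eqDist s) X X ≤ 0 := by
  apply csInf_le
  · refine ⟨0, fun c hc => ?_⟩
    obtain ⟨f, hf0, -, -, rfl⟩ := hc
    refine Finset.sum_nonneg fun i _ => Finset.sum_nonneg fun j _ => mul_nonneg ?_ (hf0 i j)
    unfold eqDist; split <;> norm_num
  · refine ⟨fun i j => if i = j then X i else 0, fun i j => ?_, fun i => by simp,
      fun j => by simp, ?_⟩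
    · simp only []; split; exacts [hX i, le_refl 0]
    · symm
      refine Finset.sum_eq_zero fun i _ => Finset.sum_eq_zero fun j _ => ?_
      rcases eq_or_ne i j with h | h <;> simp [eqDist, h]

lemma EMD_lower {s : ℕ} (X Y : Fin s → ℝ) (hX : ∀ i, 0 ≤ X i) (hY : ∀ i, 0 ≤ Y i)
    (hXs : ∑ i, X i = 1) (hYs : ∑ i, Y i = 1) (a : Fin s) (hXa : X a = 0) :
    Y a ≤ EMD (eqDist s) X Y := by
  apply le_csInf
  · exact ⟨_, fun i j => X i * Y j, fun i j => mul_nonneg (hX i) (hY j),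
      fun i => by rw [← Finset.mul_sum, hYs, mul_one],
      fun j => by rw [← Finset.sum_mul, hXs, one_mul], rfl⟩
  · rintro c ⟨f, hf0, hrow, hcol, rfl⟩
    have hfaa : f a a = 0 := by
      have h1 : f a a ≤ ∑ j, f a j :=
        Finset.single_le_sum (fun j _ => hf0 a j) (Finset.mem_univ a)
      have h2 := hrow a
      have := hf0 a a
      linarith
    have hterm : ∀ i, eqDist s i a * f i a = f i a - (if i = a then f i a else 0) := by
      intro i
      rcases eq_or_ne i a with h | h <;> simp [eqDist, h]
    have key : ∑ i, eqDist s i a * f i a = Y a := by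
      simp only [hterm]
      rw [Finset.sum_sub_distrib, Finset.sum_ite_eq' Finset.univ a (fun i => f i a)]
      simp [hcol a, hfaa]
    calc Y a = ∑ i, eqDist s i a * f i a := key.symm
      _ ≤ ∑ i, ∑ j, eqDist s i j * f i j := by
          refine Finset.sum_le_sum fun i _ => ?_
          refine Finset.single_le_sum (fun j _ => mul_nonneg ?_ (hf0 i j)) (Finset.mem_univ a)
          unfold eqDist; split <;> norm_num

lemma SAdist_nonneg {N s : ℕ} (SA : Fin N → Fin s) (B : Finset (Fin N)) (i : Fin s) :
    0 ≤ SAdist SA B i := by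
  unfold SAdist; positivity

lemma SAdist_sum {N s : ℕ} (SA : Fin N → Fin s) (B : Finset (Fin N)) (hB : B.Nonempty) :
    ∑ a, SAdist SA B a = 1 := by
  unfold SAdist
  rw [← Finset.sum_div, ← Nat.cast_sum,
    ← Finset.card_eq_sum_card_fiberwise (fun x _ => Finset.mem_univ (SA x))]
  rw [div_self]
  exact_mod_cast (Finset.card_pos.mpr hB).ne'

lemma agree_iff {N m : ℕ} (e : Fin m → Finset (Fin N)) (B : Finset (Fin N))
    (hB : 1 < B.card) (j : Fin m) :
    (∀ i ∈ B, ∀ i' ∈ B, (if i ∈ e j then 0 else (i : ℕ) + 1) =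
      (if i' ∈ e j then 0 else (i' : ℕ) + 1)) ↔ B ⊆ e j := by
  constructor
  · intro h i hi
    by_contra hne
    obtain ⟨i', hi', hii'⟩ := Finset.exists_mem_ne hB i
    have := h i hi i' hi'
    rw [if_neg hne] at this
    by_cases h2 : i' ∈ e j
    · rw [if_pos h2] at this; omega
    · rw [if_neg h2] at this
      exact hii' (Fin.ext (by omega))
  · intro h i hi i' hi'
    rw [if_pos (h hi), if_pos (h hi')]

lemma filter_not_card_eq1 {m' : ℕ} (s : Finset (Fin m')) {q : Fin m' → Prop}
    [DecidablePred q] (j₀ : Fin m') (hq : Finset.univ.filter q = {j₀})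
    (h : ∀ a, a ∈ s ↔ ¬ q a) : s.card = m' - 1 := by
  have hp : s = Finset.univ \ Finset.univ.filter q := by
    ext a; simp [h a, Finset.mem_sdiff, Finset.mem_filter]
  rw [hp, Finset.card_sdiff_of_subset (Finset.filter_subset _ _), Finset.card_univ, Fintype.card_fin,
    hq, Finset.card_singleton]

lemma filter_not_card_ge {m' : ℕ} (s : Finset (Fin m')) {q : Fin m' → Prop}
    [DecidablePred q] (hq : (Finset.univ.filter q).card ≤ 1)
    (h : ∀ a, a ∈ s ↔ ¬ q a) : m' - 1 ≤ s.card := by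
  have hp : s = Finset.univ \ Finset.univ.filter q := by
    ext a; simp [h a, Finset.mem_sdiff, Finset.mem_filter]
  rw [hp, Finset.card_sdiff_of_subset (Finset.filter_subset _ _), Finset.card_univ, Fintype.card_fin]
  omega

lemma filter_not_card_lt {m' : ℕ} (hm : 1 ≤ m') {c : ℕ} (hc : 0 < c)
    (s : Finset (Fin m')) {q : Fin m' → Prop} [DecidablePred q]
    (hq : Finset.univ.filter q = ∅) (h : ∀ a, a ∈ s ↔ ¬ q a) :
    c * (m' - 1) < c * s.card := by
  have hp : s = Finset.univ := by
    ext a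
    have := Finset.eq_empty_iff_forall_notMem.mp hq a
    simp only [Finset.mem_filter, Finset.mem_univ, true_and] at this
    simp only [Finset.mem_univ, iff_true, h a]
    exact this
  rw [hp, Finset.card_univ, Fintype.card_fin]
  exact mul_lt_mul_of_pos_left (by omega) hc

theorem stmt11 (n m : ℕ) (hn : 1 ≤ n) (hm : 1 ≤ m)
    (χ : Fin (3 * n) → Fin 3)
    (hχ : ∀ v : Fin 3, (Finset.univ.filter (fun i => χ i = v)).card = n)
    (e : Fin m → Finset (Fin (3 * n))) (hinj : Function.Injective e)
    (he3 : ∀ j, (e j).card = 3)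
    (hfib : ∀ j, ∀ v : Fin 3, ((e j).filter (fun i => χ i = v)).card = 1)
    (t : ℝ) (ht0 : 0 ≤ t) (ht1 : t < 1 / 3) :
    (∃ M : Finset (Fin m), M.card = n ∧ M.biUnion e = Finset.univ) ↔
    (∃ P : Finset (Finset (Fin (3 * n))), IsRowPartition P ∧
      (∀ B ∈ P, EMD (eqDist 3) (SAdist χ B) (SAdist χ Finset.univ) ≤ t) ∧
      partCost (fun i j => if i ∈ e j then 0 else (i : ℕ) + 1) P ≤ 3 * n * (m - 1)) := by
  have hn3 : 0 < 3 * n := by omega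
  have hYa : ∀ a : Fin 3, SAdist χ Finset.univ a = 1 / 3 := by
    intro a
    unfold SAdist
    rw [hχ a, Finset.card_univ, Fintype.card_fin]
    have hnR : (n : ℝ) ≠ 0 := Nat.cast_ne_zero.mpr (by omega)
    push_cast
    field_simp
  have hYs : ∑ a, SAdist χ Finset.univ a = 1 :=
    SAdist_sum χ Finset.univ ⟨⟨0, hn3⟩, Finset.mem_univ _⟩
  constructor
  · rintro ⟨M, hMcard, hMcover⟩
    refine ⟨M.image e, ⟨?_, ?_, ?_⟩, ?_, ?_⟩
    · rintro B hB
      obtain ⟨j, hj, rfl⟩ := Finset.mem_image.mp hB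
      exact Finset.card_pos.mp (by rw [he3]; norm_num)
    · rintro B hB B' hB' hne
      obtain ⟨j, hj, rfl⟩ := Finset.mem_image.mp hB
      obtain ⟨j', hj', rfl⟩ := Finset.mem_image.mp hB'
      have hjj' : j ≠ j' := fun h => hne (by rw [h])
      by_contra hnd
      obtain ⟨x, hx1, hx2⟩ := Finset.not_disjoint_iff.mp hnd
      have h1 : (M.biUnion e).card = 3 * n := by
        rw [hMcover, Finset.card_univ, Fintype.card_fin]
      have hsub : M.biUnion e ⊆ (e j ∪ e j') ∪ ((M.erase j).erase j').biUnion e := by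
        intro y hy
        obtain ⟨j'', hj'', hyj⟩ := Finset.mem_biUnion.mp hy
        rcases eq_or_ne j'' j with rfl | h1
        · exact Finset.mem_union_left _ (Finset.mem_union_left _ hyj)
        rcases eq_or_ne j'' j' with rfl | h2
        · exact Finset.mem_union_left _ (Finset.mem_union_right _ hyj)
        · exact Finset.mem_union_right _ (Finset.mem_biUnion.mpr
            ⟨j'', Finset.mem_erase.mpr ⟨h2, Finset.mem_erase.mpr ⟨h1, hj''⟩⟩, hyj⟩)
      have h5 : (e j ∪ e j').card ≤ 5 := by
        have hu := Finset.card_union_add_card_inter (e j) (e j')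
        have hi : 1 ≤ (e j ∩ e j').card :=
          Finset.card_pos.mpr ⟨x, Finset.mem_inter.mpr ⟨hx1, hx2⟩⟩
        have := he3 j; have := he3 j'
        omega
      have hM2 : (((M.erase j).erase j')).card = n - 2 := by
        rw [Finset.card_erase_of_mem (Finset.mem_erase.mpr ⟨hjj'.symm, hj'⟩),
          Finset.card_erase_of_mem hj, hMcard]
        omega
      have h6 : (((M.erase j).erase j').biUnion e).card ≤ 3 * (n - 2) := by
        calc (((M.erase j).erase j').biUnion e).card
            ≤ ∑ j'' ∈ (M.erase j).erase j', (e j'').card := Finset.card_biUnion_le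
          _ = 3 * (n - 2) := by
              rw [Finset.sum_congr rfl (fun j'' _ => he3 j''), Finset.sum_const, hM2,
                smul_eq_mul, Nat.mul_comm]
      have hn2 : 2 ≤ n := by
        have : 2 ≤ M.card := Finset.one_lt_card.mpr ⟨j, hj, j', hj', hjj'⟩
        omega
      have := Finset.card_le_card hsub
      have := Finset.card_union_le (e j ∪ e j') (((M.erase j).erase j').biUnion e)
      omega
    · intro i
      have : i ∈ M.biUnion e := by rw [hMcover]; exact Finset.mem_univ i
      obtain ⟨j, hj, hij⟩ := Finset.mem_biUnion.mp this
      exact ⟨e j, Finset.mem_image_of_mem e hj, hij⟩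
    · rintro B hB
      obtain ⟨j, hj, rfl⟩ := Finset.mem_image.mp hB
      have hXa : ∀ a : Fin 3, SAdist χ (e j) a = 1 / 3 := by
        intro a
        unfold SAdist
        rw [hfib j a, he3 j]
        norm_num
      have hXY : SAdist χ (e j) = SAdist χ Finset.univ :=
        funext fun a => by rw [hXa a, hYa a]
      rw [hXY]
      exact le_trans (EMD_self_nonpos _ (SAdist_nonneg χ Finset.univ)) ht0
    · have hsupp : ∀ j : Fin m,
          suppCost (fun i j => if i ∈ e j then 0 else (i : ℕ) + 1) (e j) = 3 * (m - 1) := by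
        intro j
        unfold suppCost
        beta_reduce
        rw [he3]
        congr 1
        have hfil : Finset.univ.filter (fun j' : Fin m => ∀ i ∈ e j, ∀ i' ∈ e j,
            (if i ∈ e j' then 0 else (i : ℕ) + 1) = (if i' ∈ e j' then 0 else (i' : ℕ) + 1))
            = {j} := by
          ext j'
          simp only [Finset.mem_filter, Finset.mem_univ, true_and, Finset.mem_singleton]
          rw [agree_iff e (e j) (by rw [he3]; norm_num) j']
          constructor
          · intro h
            exact (hinj (Finset.eq_of_subset_of_card_le h (by rw [he3, he3]))).symm
          · rintro rfl; exact Finset.Subset.rfl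
        exact filter_not_card_eq1 _ j hfil (fun a => by
          simp only [Finset.mem_filter, Finset.mem_univ, true_and])
      unfold partCost
      rw [Finset.sum_image (fun j _ j' _ h => hinj h)]
      rw [Finset.sum_congr rfl (fun j _ => hsupp j), Finset.sum_const, hMcard, smul_eq_mul]
      have : n * (3 * (m - 1)) = 3 * n * (m - 1) := by ring
      omega
  · rintro ⟨P, ⟨hPne, hPdisj, hPcov⟩, hEMD, hcost⟩
    have hfibers : ∀ B ∈ P, ∀ a : Fin 3, (B.filter (fun r => χ r = a)).Nonempty := by
      intro B hB a
      rw [Finset.nonempty_iff_ne_empty]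
      intro hemp
      have hX0 : SAdist χ B a = 0 := by
        unfold SAdist; rw [hemp]; simp
      have hlow := EMD_lower (SAdist χ B) (SAdist χ Finset.univ) (SAdist_nonneg χ B)
        (SAdist_nonneg χ Finset.univ) (SAdist_sum χ B (hPne B hB)) hYs a hX0
      have h2 := hEMD B hB
      rw [hYa a] at hlow
      linarith
    have hcard3 : ∀ B ∈ P, 3 ≤ B.card := by
      intro B hB
      rw [Finset.card_eq_sum_card_fiberwise (f := χ) (t := Finset.univ)
        (fun x _ => Finset.mem_univ _)]
      calc (3 : ℕ) = ∑ _a : Fin 3, 1 := by simp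
        _ ≤ ∑ a, (B.filter (fun r => χ r = a)).card :=
            Finset.sum_le_sum fun a _ => Finset.card_pos.mpr (hfibers B hB a)
    have hsum : ∑ B ∈ P, B.card = 3 * n := by
      have hun : P.biUnion id = Finset.univ := by
        apply Finset.eq_univ_of_forall
        intro i
        obtain ⟨B, hB, hiB⟩ := hPcov i
        exact Finset.mem_biUnion.mpr ⟨B, hB, hiB⟩
      have hcb := Finset.card_biUnion
        (s := P) (t := id) (fun B hB B' hB' hne => hPdisj B hB B' hB' hne)
      rw [hun, Finset.card_univ, Fintype.card_fin] at hcb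
      simpa using hcb.symm
    have hclaim : ∀ B ∈ P, ∃ j, B = e j := by
      by_contra hcon
      push_neg at hcon
      obtain ⟨B₀, hB₀, hB₀ne⟩ := hcon
      have hsupp_ge : ∀ B ∈ P,
          B.card * (m - 1) ≤ suppCost (fun i j => if i ∈ e j then 0 else (i : ℕ) + 1) B := by
        intro B hB
        unfold suppCost
        beta_reduce
        apply Nat.mul_le_mul_left
        have hagree1 : (Finset.univ.filter (fun j : Fin m => ∀ i ∈ B, ∀ i' ∈ B,
            (if i ∈ e j then 0 else (i : ℕ) + 1) = (if i' ∈ e j then 0 else (i' : ℕ) + 1))).card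
            ≤ 1 := by
          apply Finset.card_le_one.mpr
          intro j hj j' hj'
          simp only [Finset.mem_filter, Finset.mem_univ, true_and] at hj hj'
          have h1 : B ⊆ e j :=
            (agree_iff e B (by have := hcard3 B hB; omega) j).mp hj
          have h1' : B ⊆ e j' :=
            (agree_iff e B (by have := hcard3 B hB; omega) j').mp hj'
          have hBj : B = e j :=
            Finset.eq_of_subset_of_card_le h1 (by rw [he3]; exact hcard3 B hB)
          have hBj' : B = e j' :=
            Finset.eq_of_subset_of_card_le h1' (by rw [he3]; exact hcard3 B hB)
          exact hinj (hBj ▸ hBj')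
        exact filter_not_card_ge _ hagree1 (fun a => by
          simp only [Finset.mem_filter, Finset.mem_univ, true_and])
      have hB₀strict : B₀.card * (m - 1) <
          suppCost (fun i j => if i ∈ e j then 0 else (i : ℕ) + 1) B₀ := by
        unfold suppCost
        beta_reduce
        have hagree0 : Finset.univ.filter (fun j : Fin m => ∀ i ∈ B₀, ∀ i' ∈ B₀,
            (if i ∈ e j then 0 else (i : ℕ) + 1) = (if i' ∈ e j then 0 else (i' : ℕ) + 1))
            = ∅ := by
          rw [Finset.eq_empty_iff_forall_notMem]
          intro j hj
          simp only [Finset.mem_filter, Finset.mem_univ, true_and] at hj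
          have h1 : B₀ ⊆ e j :=
            (agree_iff e B₀ (by have := hcard3 B₀ hB₀; omega) j).mp hj
          exact hB₀ne j (Finset.eq_of_subset_of_card_le h1 (by rw [he3]; exact hcard3 B₀ hB₀))
        exact filter_not_card_lt hm (by have := hcard3 B₀ hB₀; omega) _ hagree0 (fun a => by
          simp only [Finset.mem_filter, Finset.mem_univ, true_and])
      have hlt : ∑ B ∈ P, B.card * (m - 1) <
          partCost (fun i j => if i ∈ e j then 0 else (i : ℕ) + 1) P :=
        Finset.sum_lt_sum hsupp_ge ⟨B₀, hB₀, hB₀strict⟩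
      rw [← Finset.sum_mul, hsum] at hlt
      omega
    refine ⟨Finset.univ.filter (fun j => e j ∈ P), ?_, ?_⟩
    · have himg : (Finset.univ.filter (fun j => e j ∈ P)).image e = P := by
        ext B
        constructor
        · intro hB
          obtain ⟨j, hj, rfl⟩ := Finset.mem_image.mp hB
          exact (Finset.mem_filter.mp hj).2
        · intro hB
          obtain ⟨j, rfl⟩ := hclaim B hB
          exact Finset.mem_image_of_mem e (Finset.mem_filter.mpr ⟨Finset.mem_univ _, hB⟩)
      have hMP : (Finset.univ.filter (fun j => e j ∈ P)).card = P.card := by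
        have h := Finset.card_image_of_injective (Finset.univ.filter (fun j => e j ∈ P)) hinj
        rw [himg] at h
        omega
      have hP3 : ∑ B ∈ P, B.card = 3 * P.card := by
        have h3 : ∀ B ∈ P, B.card = 3 := fun B hB => by
          obtain ⟨j, rfl⟩ := hclaim B hB; exact he3 j
        calc ∑ B ∈ P, B.card = ∑ _B ∈ P, 3 := Finset.sum_congr rfl h3
          _ = 3 * P.card := by rw [Finset.sum_const, smul_eq_mul, Nat.mul_comm]
      rw [hP3] at hsum
      omega
    · apply Finset.eq_univ_of_forall
      intro i
      obtain ⟨B, hB, hiB⟩ := hPcov i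
      obtain ⟨j, rfl⟩ := hclaim B hB
      exact Finset.mem_biUnion.mpr ⟨j, Finset.mem_filter.mpr ⟨Finset.mem_univ _, hB⟩, hiB⟩
end

section
/- Let S be a finite set with |S| = n, and let P be a partition of S into pairwise disjoint nonempty blocks each of size at most n/2 (i.e., 2·|B| ≤ n for every block B). Then there exists a subfamily A ⊆ P of blocks such that n ≤ 4·∑_{B ∈ A} |B| and 4·∑_{B ∈ A} |B| ≤ 3n. -/
open Finset

theorem stmt13 {α : Type*} [DecidableEq α] (S : Finset α) (n : ℕ) (hn : S.card = n)
    (P : Finset (Finset α))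
    (hne : ∀ B ∈ P, B.Nonempty)
    (hdis : ∀ B ∈ P, ∀ B' ∈ P, B ≠ B' → Disjoint B B')
    (hsub : ∀ B ∈ P, B ⊆ S)
    (hcover : ∀ a ∈ S, ∃ B ∈ P, a ∈ B)
    (hsize : ∀ B ∈ P, 2 * B.card ≤ n) :
    ∃ A ⊆ P, n ≤ 4 * ∑ B ∈ A, B.card ∧ 4 * ∑ B ∈ A, B.card ≤ 3 * n := by
  have htot : ∑ B ∈ P, B.card = n := by
    rw [← hn]
    have hS : S = P.biUnion id := by
      ext a
      simp only [mem_biUnion, id]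
      constructor
      · exact hcover a
      · rintro ⟨B, hB, ha⟩; exact hsub B hB ha
    rw [hS]
    exact (card_biUnion (fun x hx y hy => hdis x hx y hy)).symm
  have hPin : P ∈ P.powerset.filter (fun A => n ≤ 4 * ∑ B ∈ A, B.card) := by
    simp only [mem_filter, mem_powerset, htot]
    exact ⟨subset_rfl, by omega⟩
  obtain ⟨A, hAmem, hmin⟩ :=
    Finset.exists_min_image _
      (fun A => ∑ B ∈ A, B.card) ⟨P, hPin⟩
  simp only [mem_filter, mem_powerset] at hAmem
  obtain ⟨hAP, hlow⟩ := hAmem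
  refine ⟨A, hAP, hlow, ?_⟩
  rcases Nat.eq_zero_or_pos n with h0 | hpos
  · -- n = 0: minimality against ∅ gives sum = 0
    have hempty : (∅ : Finset (Finset α)) ∈
        P.powerset.filter (fun A => n ≤ 4 * ∑ B ∈ A, B.card) := by
      simp [h0]
    have := hmin ∅ hempty
    simp only [Finset.sum_empty] at this
    omega
  · have hAne : A.Nonempty := by
      rcases A.eq_empty_or_nonempty with rfl | h
      · simp at hlow; omega
      · exact h
    obtain ⟨B, hB⟩ := hAne
    have hBP : B ∈ P := hAP hB
    have hBpos : 0 < B.card := card_pos.mpr (hne B hBP)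
    have hsum : ∑ C ∈ A.erase B, C.card + B.card = ∑ C ∈ A, C.card :=
      Finset.sum_erase_add A _ hB
    have herase : ¬ (n ≤ 4 * ∑ C ∈ A.erase B, C.card) := by
      intro hc
      have hmem : A.erase B ∈ P.powerset.filter (fun A => n ≤ 4 * ∑ B ∈ A, B.card) := by
        simp only [mem_filter, mem_powerset]
        exact ⟨(erase_subset _ _).trans hAP, hc⟩
      have := hmin _ hmem
      have hlt : ∑ C ∈ A.erase B, C.card < ∑ C ∈ A, C.card := by omega
      omega
    have hBsize := hsize B hBP
    omega
end

section
/- Let T : Fin n → Fin m → Σ be a table and k ≥ 1. Then every k-anonymous partition P of the rows of T satisfies cost(P) ≥ |{i ∈ Fin n : |class(i)| < k}|. -/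
open Finset

attribute [local instance] Classical.propDecidable

/-- The duplicate class of row `i`: all rows identical to row `i`. -/
noncomputable def cls {n m : ℕ} {σ : Type*} (T : Fin n → Fin m → σ) (i : Fin n) :
    Finset (Fin n) :=
  Finset.univ.filter (fun i' => ∀ j, T i' j = T i j)

theorem stmt14 {σ : Type*} (n m k : ℕ) (hk : 1 ≤ k) (T : Fin n → Fin m → σ)
    (P : Finset (Finset (Fin n))) (hP : IsRowPartition P)
    (hanon : ∀ B ∈ P, k ≤ B.card) :
    (Finset.univ.filter (fun i : Fin n => (cls T i).card < k)).card ≤ partCost T P := by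
  classical
  obtain ⟨hne, hdisj, hcov⟩ := hP
  set p : Fin n → Prop := fun i => (cls T i).card < k with hp
  have hcover : (Finset.univ.filter p) ⊆ P.biUnion (fun B => B.filter p) := by
    intro i hi
    simp only [mem_filter, mem_univ, true_and] at hi
    obtain ⟨B, hB, hiB⟩ := hcov i
    exact mem_biUnion.2 ⟨B, hB, mem_filter.2 ⟨hiB, hi⟩⟩
  calc (Finset.univ.filter p).card
      ≤ (P.biUnion (fun B => B.filter p)).card := Finset.card_le_card hcover
    _ ≤ ∑ B ∈ P, (B.filter p).card := Finset.card_biUnion_le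
    _ ≤ ∑ B ∈ P, suppCost T B := by
        apply Finset.sum_le_sum
        intro B hB
        rcases (B.filter p).eq_empty_or_nonempty with h | ⟨i, hi⟩
        · simp [h]
        · simp only [mem_filter] at hi
          obtain ⟨hiB, hik⟩ := hi
          have hcol : (Finset.univ.filter
              (fun j : Fin m => ¬ ∀ i ∈ B, ∀ i' ∈ B, T i j = T i' j)).Nonempty := by
            by_contra hcon
            rw [Finset.not_nonempty_iff_eq_empty, Finset.filter_eq_empty_iff] at hcon
            have hagree : ∀ j : Fin m, ∀ i' ∈ B, T i' j = T i j := by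
              intro j i' hi'
              have h2 := not_not.mp (hcon (Finset.mem_univ j))
              exact h2 i' hi' i hiB
            have hsub : B ⊆ cls T i := by
              intro i' hi'
              simp only [cls, mem_filter, mem_univ, true_and]
              exact fun j => hagree j i' hi'
            have h3 := Finset.card_le_card hsub
            have h4 := hanon B hB
            omega
          have h1 : 1 ≤ (Finset.univ.filter
              (fun j : Fin m => ¬ ∀ i ∈ B, ∀ i' ∈ B, T i j = T i' j)).card :=
            Finset.card_pos.2 hcol
          calc (B.filter p).card ≤ B.card := Finset.card_filter_le _ _
            _ = B.card * 1 := (mul_one _).symm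
            _ ≤ suppCost T B := Nat.mul_le_mul_left _ h1
end

section
/- Let T : Fin n → Fin m → Σ be a table and k ≥ 1. If some row i of T has duplicate class class(i) of size strictly less than k, then every k-anonymous partition of the rows of T has cost at least k. -/
open Finset

attribute [local instance] Classical.propDecidable

theorem stmt15 {σ : Type*} (n m k : ℕ) (hk : 1 ≤ k) (T : Fin n → Fin m → σ)
    (i : Fin n) (hi : (cls T i).card < k)
    (P : Finset (Finset (Fin n))) (hP : IsRowPartition P)
    (hanon : ∀ B ∈ P, k ≤ B.card) :
    k ≤ partCost T P := by
  obtain ⟨B, hBP, hiB⟩ := hP.2.2 i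
  -- B is not a subset of cls T i
  have hnsub : ¬ B ⊆ cls T i := by
    intro hsub
    have := hanon B hBP
    have := Finset.card_le_card hsub
    omega
  obtain ⟨i', hi'B, hi'ncls⟩ := Finset.not_subset.mp hnsub
  have : ¬ ∀ j, T i' j = T i j := by
    intro h
    exact hi'ncls (by simp [cls, h])
  obtain ⟨j, hj⟩ := not_forall.mp this
  have hjmem : j ∈ Finset.univ.filter (fun j : Fin m => ¬ ∀ a ∈ B, ∀ b ∈ B, T a j = T b j) := by
    simp only [mem_filter, mem_univ, true_and]
    intro h
    exact hj (h i' hi'B i hiB)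
  have h1 : 1 ≤ (Finset.univ.filter (fun j : Fin m => ¬ ∀ a ∈ B, ∀ b ∈ B, T a j = T b j)).card :=
    Finset.card_pos.mpr ⟨j, hjmem⟩
  have hs : k ≤ suppCost T B := by
    unfold suppCost
    calc k ≤ B.card := hanon B hBP
    _ = B.card * 1 := (mul_one _).symm
    _ ≤ _ := Nat.mul_le_mul_left _ h1
  calc k ≤ suppCost T B := hs
  _ ≤ partCost T P := Finset.single_le_sum (fun _ _ => Nat.zero_le _) hBP
end

section
/- Let T : Fin n → Fin m → Σ be a table and k ≥ 1. Let B = {i ∈ Fin n : |class(i)| < k}, suppose B ≠ ∅, suppose at least one duplicate class has size ≥ k, and suppose |B| + ∑_{C} (|C| − k) < k, where the sum ranges over the duplicate classes C of size at least k. Then every k-anonymous partition of the rows of T has cost at least |B| + c_min, where c_min is the minimum size of a duplicate class of size at least k. -/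
open Finset

attribute [local instance] Classical.propDecidable

lemma mem_cls_self {n m : ℕ} {σ : Type*} (T : Fin n → Fin m → σ) (i : Fin n) :
    i ∈ cls T i := by simp [cls]

lemma cls_eq_of_mem {n m : ℕ} {σ : Type*} (T : Fin n → Fin m → σ) {i i' : Fin n}
    (h : i' ∈ cls T i) : cls T i' = cls T i := by
  simp only [cls, Finset.mem_filter, Finset.mem_univ, true_and] at h
  ext x
  simp only [cls, Finset.mem_filter, Finset.mem_univ, true_and]
  constructor
  · intro hx j; rw [hx j, h j]
  · intro hx j; rw [hx j]; exact (h j).symm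

theorem stmt16 {σ : Type*} (n m k : ℕ) (hk : 1 ≤ k) (T : Fin n → Fin m → σ)
    (hBne : (Finset.univ.filter (fun i : Fin n => (cls T i).card < k)).Nonempty)
    (hbig : ∃ i : Fin n, k ≤ (cls T i).card)
    (hsmallsum :
      (Finset.univ.filter (fun i : Fin n => (cls T i).card < k)).card +
        ∑ C ∈ (Finset.univ.image (cls T)).filter (fun C => k ≤ C.card), (C.card - k)
      < k)
    (P : Finset (Finset (Fin n))) (hP : IsRowPartition P)
    (hanon : ∀ B ∈ P, k ≤ B.card) :
    (Finset.univ.filter (fun i : Fin n => (cls T i).card < k)).card +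
        sInf {c : ℕ | ∃ i : Fin n, k ≤ (cls T i).card ∧ (cls T i).card = c}
      ≤ partCost T P := by
  classical
  obtain ⟨hPne, hPdisj, hPcover⟩ := hP
  set Bset := Finset.univ.filter (fun i : Fin n => (cls T i).card < k) with hBdef
  set Pim := P.filter (fun D => ¬ ∀ i ∈ D, ∀ i' ∈ D, ∀ j, T i j = T i' j) with hPimdef
  set S := Pim.biUnion id with hSdef
  set cmin := sInf {c : ℕ | ∃ i : Fin n, k ≤ (cls T i).card ∧ (cls T i).card = c} with hcmindef
  -- a pure block containing i is inside cls T i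
  have hpure_sub : ∀ D, (∀ a ∈ D, ∀ a' ∈ D, ∀ j, T a j = T a' j) →
      ∀ i ∈ D, D ⊆ cls T i := by
    intro D hpure i hi i' hi'
    simp only [cls, Finset.mem_filter, Finset.mem_univ, true_and]
    intro j
    exact hpure i' hi' i hi j
  -- a block containing a row of Bset is impure
  have himpure : ∀ i ∈ Bset, ∀ D ∈ P, i ∈ D → D ∈ Pim := by
    intro i hi D hD hiD
    rw [hPimdef, Finset.mem_filter]
    refine ⟨hD, fun hpure => ?_⟩
    have h1 := Finset.card_le_card (hpure_sub D hpure i hiD)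
    have h2 := hanon D hD
    rw [hBdef, Finset.mem_filter] at hi
    omega
  have hBS : Bset ⊆ S := by
    intro i hi
    obtain ⟨D, hD, hiD⟩ := hPcover i
    rw [hSdef, Finset.mem_biUnion]
    exact ⟨D, himpure i hi D hD hiD, hiD⟩
  -- pure blocks are disjoint from S
  have hpureS : ∀ D ∈ P, (∀ a ∈ D, ∀ a' ∈ D, ∀ j, T a j = T a' j) → Disjoint D S := by
    intro D hD hpure
    rw [hSdef, Finset.disjoint_biUnion_right]
    intro E hE
    rw [hPimdef, Finset.mem_filter] at hE
    exact hPdisj D hD E hE.1 (fun h => hE.2 (h ▸ hpure))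
  -- cost lower bound: S.card ≤ partCost T P
  have hScard : S.card = ∑ D ∈ Pim, D.card := by
    rw [hSdef]
    apply Finset.card_biUnion
    intro x hx y hy hxy
    exact hPdisj x (Finset.mem_of_mem_filter x hx) y (Finset.mem_of_mem_filter y hy) hxy
  have hcost : S.card ≤ partCost T P := by
    have h1 : ∑ D ∈ Pim, D.card ≤ ∑ D ∈ Pim, suppCost T D := by
      apply Finset.sum_le_sum
      intro D hD
      rw [hPimdef, Finset.mem_filter] at hD
      obtain ⟨hDP, hnot⟩ := hD
      push_neg at hnot
      obtain ⟨i, hi, i', hi', j, hj⟩ := hnot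
      have hne : (Finset.univ.filter
          (fun j : Fin m => ¬ ∀ a ∈ D, ∀ a' ∈ D, T a j = T a' j)).Nonempty := by
        refine ⟨j, ?_⟩
        simp only [Finset.mem_filter, Finset.mem_univ, true_and]
        intro h
        exact hj (h i hi i' hi')
      have hpos := Finset.card_pos.mpr hne
      unfold suppCost
      exact Nat.le_mul_of_pos_right _ hpos
    have h2 : ∑ D ∈ Pim, suppCost T D ≤ partCost T P := by
      unfold partCost
      exact Finset.sum_le_sum_of_subset (Finset.filter_subset _ _)
    omega
  -- key: cmin ≤ (S \ Bset).card
  have hkey : cmin ≤ (S \ Bset).card := by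
    by_contra hcon
    push_neg at hcon
    by_cases hcase : ∃ i : Fin n, k ≤ (cls T i).card ∧ cls T i ⊆ S
    · obtain ⟨i, hik, hiS⟩ := hcase
      have hsub : cls T i ⊆ S \ Bset := by
        intro i' hi'
        rw [Finset.mem_sdiff]
        refine ⟨hiS hi', ?_⟩
        simp only [hBdef, Finset.mem_filter, Finset.mem_univ, true_and, not_lt]
        rw [cls_eq_of_mem T hi']
        exact hik
      have h1 : cmin ≤ (cls T i).card := Nat.sInf_le ⟨i, hik, rfl⟩
      have h2 := Finset.card_le_card hsub
      omega
    · push_neg at hcase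
      have hclass : ∀ C ∈ (Finset.univ.image (cls T)).filter (fun C => k ≤ C.card),
          (C ∩ S).card ≤ C.card - k := by
        intro C hC
        rw [Finset.mem_filter, Finset.mem_image] at hC
        obtain ⟨⟨i, _, hCi⟩, hCk⟩ := hC
        subst hCi
        obtain ⟨i', hi'C, hi'S⟩ := Finset.not_subset.mp (hcase i hCk)
        obtain ⟨D, hD, hi'D⟩ := hPcover i'
        have hDpure : ∀ a ∈ D, ∀ a' ∈ D, ∀ j, T a j = T a' j := by
          by_contra hp
          apply hi'S
          rw [hSdef, Finset.mem_biUnion]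
          exact ⟨D, by rw [hPimdef, Finset.mem_filter]; exact ⟨hD, hp⟩, hi'D⟩
        have hDsub : D ⊆ cls T i := by
          have h := hpure_sub D hDpure i' hi'D
          rwa [cls_eq_of_mem T hi'C] at h
        have hDdisj : Disjoint D S := hpureS D hD hDpure
        have hsub2 : (cls T i ∩ S) ∪ D ⊆ cls T i := by
          intro x hx
          rcases Finset.mem_union.mp hx with h | h
          · exact (Finset.mem_inter.mp h).1
          · exact hDsub h
        have hdisj2 : Disjoint (cls T i ∩ S) D :=
          Disjoint.mono_left Finset.inter_subset_right hDdisj.symm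
        have h3 := Finset.card_le_card hsub2
        rw [Finset.card_union_of_disjoint hdisj2] at h3
        have hDk := hanon D hD
        omega
      have hsubB : S \ Bset ⊆
          ((Finset.univ.image (cls T)).filter (fun C => k ≤ C.card)).biUnion
            (fun C => C ∩ S) := by
        intro i' hi'
        rw [Finset.mem_sdiff] at hi'
        have hk' : k ≤ (cls T i').card := by
          have h := hi'.2
          simp only [hBdef, Finset.mem_filter, Finset.mem_univ, true_and, not_lt] at h
          exact h
        rw [Finset.mem_biUnion]
        refine ⟨cls T i', ?_, ?_⟩
        · rw [Finset.mem_filter]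
          exact ⟨Finset.mem_image.mpr ⟨i', Finset.mem_univ _, rfl⟩, hk'⟩
        · exact Finset.mem_inter.mpr ⟨mem_cls_self T i', hi'.1⟩
      have hup : (S \ Bset).card ≤
          ∑ C ∈ (Finset.univ.image (cls T)).filter (fun C => k ≤ C.card),
            (C.card - k) := by
        calc (S \ Bset).card ≤ _ := Finset.card_le_card hsubB
          _ ≤ ∑ C ∈ (Finset.univ.image (cls T)).filter (fun C => k ≤ C.card),
              (C ∩ S).card := Finset.card_biUnion_le
          _ ≤ _ := Finset.sum_le_sum hclass
      obtain ⟨i0, hi0⟩ := hBne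
      obtain ⟨D0, hD0, hi0D0⟩ := hPcover i0
      have hD0im : D0 ∈ Pim := himpure i0 hi0 D0 hD0 hi0D0
      have hD0S : D0 ⊆ S := fun x hx => Finset.mem_biUnion.mpr ⟨D0, hD0im, hx⟩
      have hsplit : D0.card ≤ (D0 \ Bset).card + Bset.card := by
        calc D0.card ≤ ((D0 \ Bset) ∪ Bset).card := by
              apply Finset.card_le_card
              intro x hx
              by_cases h : x ∈ Bset
              · exact Finset.mem_union_right _ h
              · exact Finset.mem_union_left _ (Finset.mem_sdiff.mpr ⟨hx, h⟩)
          _ ≤ _ := Finset.card_union_le _ _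
      have hmono : (D0 \ Bset).card ≤ (S \ Bset).card :=
        Finset.card_le_card (Finset.sdiff_subset_sdiff hD0S (Finset.Subset.refl _))
      have hD0k := hanon D0 hD0
      omega
  have hBsubS := Finset.card_le_card hBS
  have hsd : (S \ Bset).card = S.card - Bset.card := Finset.card_sdiff_of_subset hBS
  omega
end

section
/- Let M be a finite multiset over a type α with |M| ≥ 2 such that every element occurs in M with multiplicity at most |M|/2 (i.e., 2·count(a, M) ≤ |M| for every a : α). Then M can be written as a sum of finitely many multisets, each of which has cardinality 2 or 3 and contains no repeated element (is Nodup). -/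
private lemma stmt18_aux {α : Type*} [DecidableEq α] :
    ∀ n (M : Multiset α), Multiset.card M = n → 2 ≤ n →
    (∀ a : α, 2 * M.count a ≤ n) →
    ∃ L : List (Multiset α),
      (∀ N ∈ L, (Multiset.card N = 2 ∨ Multiset.card N = 3) ∧ N.Nodup) ∧
      M = L.sum := by
  intro n
  induction n using Nat.strong_induction_on with
  | _ n ih =>
    intro M hn h2 hdiv
    by_cases hn3 : n ≤ 3
    · refine ⟨[M], ?_, by simp⟩
      intro N hN
      simp only [List.mem_singleton] at hN
      subst hN
      constructor
      · omega
      · rw [Multiset.nodup_iff_count_le_one]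
        intro a
        have := hdiv a
        omega
    · -- n ≥ 4
      push_neg at hn3
      have hM0 : M ≠ 0 := by
        intro h; subst h; simp at hn; omega
      obtain ⟨a, haF, hamax⟩ := Finset.exists_max_image M.toFinset M.count
        (by simpa using hM0)
      have haM : a ∈ M := Multiset.mem_toFinset.mp haF
      -- the multiset of elements different from a
      set F := M.filter (· ≠ a) with hF
      have hcountF : ∀ c, c ≠ a → F.count c = M.count c := by
        intro c hc
        simp [hF, Multiset.count_filter, hc]
      have hcardF : Multiset.card F + M.count a = n := by
        have : M.filter (· ≠ a) + M.filter (¬ · ≠ a) = M := Multiset.filter_add_not _ M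
        have hcard := congrArg Multiset.card this
        simp only [Multiset.card_add] at hcard
        have : M.filter (¬ · ≠ a) = M.filter (· = a) := by
          apply Multiset.filter_congr
          intro x _; constructor <;> intro h <;> simp_all
        rw [this, ← hF] at hcard
        have h2' : Multiset.card (M.filter (· = a)) = M.count a := by
          rw [Multiset.count_eq_card_filter_eq]
          congr 1
          apply Multiset.filter_congr
          intro x _; constructor <;> intro h <;> simp_all
        omega
      have hFne : F ≠ 0 := by
        intro h
        rw [h] at hcardF
        have := hdiv a
        simp at hcardF
        omega
      obtain ⟨b, hbF, hbmax⟩ := Finset.exists_max_image F.toFinset F.count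
        (by simpa using hFne)
      have hbF' : b ∈ F := Multiset.mem_toFinset.mp hbF
      have hba : b ≠ a := (Multiset.mem_filter.mp hbF').2
      have hbM : b ∈ M := (Multiset.mem_filter.mp hbF').1
      -- counts
      have hcab : M.count b ≤ M.count a := hamax b (Multiset.mem_toFinset.mpr hbM)
      have hkey : ∀ c, c ≠ a → c ≠ b → M.count c + M.count a + M.count b ≤ n := by
        intro c hca hcb
        rcases Nat.eq_zero_or_pos (M.count c) with h0 | hpos
        · have := hdiv a
          have := hdiv b
          omega
        · have hcM : c ∈ M := Multiset.count_pos.mp hpos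
          have hcF : c ∈ F := Multiset.mem_filter.mpr ⟨hcM, hca⟩
          -- count c ≤ card F - count b F : use G = F.filter (· ≠ b)
          set G := F.filter (· ≠ b) with hG
          have hcountG : G.count c = M.count c := by
            rw [hG, Multiset.count_filter]
            simp [hcb, hcountF c hca]
          have hcardG : Multiset.card G + F.count b = Multiset.card F := by
            have : F.filter (· ≠ b) + F.filter (¬ · ≠ b) = F := Multiset.filter_add_not _ F
            have hcard := congrArg Multiset.card this
            simp only [Multiset.card_add] at hcard
            have he : F.filter (¬ · ≠ b) = F.filter (· = b) := by
              apply Multiset.filter_congr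
              intro x _; constructor <;> intro h <;> simp_all
            rw [he, ← hG] at hcard
            have h2' : Multiset.card (F.filter (· = b)) = F.count b := by
              rw [Multiset.count_eq_card_filter_eq]
              congr 1
              apply Multiset.filter_congr
              intro x _; constructor <;> intro h <;> simp_all
            omega
          have hle : M.count c ≤ Multiset.card G := hcountG ▸ Multiset.count_le_card c G
          have hFb : F.count b = M.count b := hcountF b hba
          omega
      -- build M₂
      set M₂ := (M.erase a).erase b with hM₂
      have hbMa : b ∈ M.erase a := Multiset.mem_erase_of_ne hba |>.mpr hbM
      have hMeq : M = a ::ₘ b ::ₘ M₂ := by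
        rw [hM₂, Multiset.cons_erase hbMa, Multiset.cons_erase haM]
      have hcard₂ : Multiset.card M₂ = n - 2 := by
        have := congrArg Multiset.card hMeq
        simp at this
        omega
      have hdiv₂ : ∀ c, 2 * M₂.count c ≤ n - 2 := by
        intro c
        have hc2 : M₂.count c + (if c = a then 1 else 0) + (if c = b then 1 else 0)
            = M.count c := by
          rw [hMeq]
          by_cases hca : c = a <;> by_cases hcb : c = b <;>
            simp [Multiset.count_cons, hca, hcb] <;> omega
        by_cases hca : c = a
        · have := hdiv a; subst hca; simp [hba.symm] at hc2; omega
        · by_cases hcb : c = b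
          · have := hdiv b; subst hcb; simp [hba] at hc2; omega
          · have := hkey c hca hcb
            have hb1 : 1 ≤ M.count b := Multiset.one_le_count_iff_mem.mpr hbM
            have ha1 : 1 ≤ M.count a := Multiset.one_le_count_iff_mem.mpr haM
            simp [hca, hcb] at hc2
            have hcb' : M.count c ≤ M.count b := by
              rcases Nat.eq_zero_or_pos (M.count c) with h0 | hpos
              · omega
              · have hcM : c ∈ M := Multiset.count_pos.mp hpos
                have hcF : c ∈ F := Multiset.mem_filter.mpr ⟨hcM, hca⟩
                have := hbmax c (Multiset.mem_toFinset.mpr hcF)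
                rw [hcountF c hca, hcountF b hba] at this
                exact this
            omega
      obtain ⟨L, hL, hLsum⟩ := ih (n - 2) (by omega) M₂ hcard₂ (by omega) hdiv₂
      refine ⟨{a, b} :: L, ?_, ?_⟩
      · intro N hN
        rcases List.mem_cons.mp hN with h | h
        · subst h
          constructor
          · left; simp
          · simp [Multiset.insert_eq_cons, hba.symm]
        · exact hL N h
      · simp only [List.sum_cons, ← hLsum]
        rw [hMeq]
        simp [Multiset.insert_eq_cons]

theorem stmt18 {α : Type*} [DecidableEq α] (M : Multiset α)
    (hcard : 2 ≤ Multiset.card M)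
    (hdiv : ∀ a : α, 2 * M.count a ≤ Multiset.card M) :
    ∃ L : List (Multiset α),
      (∀ N ∈ L, (Multiset.card N = 2 ∨ Multiset.card N = 3) ∧ N.Nodup) ∧
      M = L.sum := by
  exact stmt18_aux (Multiset.card M) M rfl hcard hdiv
end
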